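/- arXiv:2505.23649 — 4 statements merged into one kernel-verified Lean document; each statement's English description precedes it below -/
import Mathlib

section
/- For every real γ > 0 there exists a constant C > 0 such that the following holds for all n ≥ 2. Let v₀ : Fin n → ℕ be any initial assignment of values and define v_k(X_k.2) = max(v_{k−1}(X_k.1), v_{k−1}(X_k.2)) and v_k(a) = v_{k−1}(a) for all other agents a. Let T = inf{k : ∀ a ∈ Fin n, v_k(a) = max_{b} v₀(b)} be the number of interactions until every agent holds the maximum initial value. Then P(T > C · n · log n) ≤ n^{−γ}, where log denotes the natural logarithm. -/
open MeasureTheory ProbabilityTheory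

namespace Stmt3Aux

/-! ### Deterministic combinatorics of the informed-set process -/

/-- one step of the informed-set process -/
def eStep {n : ℕ} (S : Finset (Fin n)) (x : Fin n × Fin n) : Finset (Fin n) :=
  if x.1 ∈ S then insert x.2 S else S

/-- deterministic evolution from the first k interactions -/
def eJ {n : ℕ} (S0 : Finset (Fin n)) : (k : ℕ) → (Fin k → Fin n × Fin n) → Finset (Fin n)
  | 0, _ => S0
  | k+1, f => eStep (eJ S0 k (fun i => f i.castSucc)) (f (Fin.last k))

lemma card_eStep_of_good {n : ℕ} {S : Finset (Fin n)} {x : Fin n × Fin n}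
    (h1 : x.1 ∈ S) (h2 : x.2 ∉ S) : (eStep S x).card = S.card + 1 := by
  simp [eStep, h1, Finset.card_insert_of_notMem h2]

lemma card_eStep_of_bad {n : ℕ} {S : Finset (Fin n)} {x : Fin n × Fin n}
    (h : ¬ (x.1 ∈ S ∧ x.2 ∉ S)) : (eStep S x).card = S.card := by
  by_cases h1 : x.1 ∈ S
  · have h2 : x.2 ∈ S := by tauto
    simp [eStep, h1, Finset.insert_eq_self.2 h2]
  · simp [eStep, h1]

lemma eStep_univ {n : ℕ} (x : Fin n × Fin n) : eStep Finset.univ x = Finset.univ := by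
  unfold eStep
  split_ifs <;> simp

/-! ### The potential function -/

/-- the potential function -/
noncomputable def gR (n s : ℕ) : ℝ :=
  ∏ t ∈ Finset.Ico s n, (1 + ((n : ℝ) - 1) / (t * ((n : ℝ) - t)))

lemma denom_pos {n t : ℕ} (h1 : 1 ≤ t) (h2 : t < n) : (0:ℝ) < t * ((n:ℝ) - t) := by
  have : (1:ℝ) ≤ t := by exact_mod_cast h1
  have : (t:ℝ) < n := by exact_mod_cast h2
  nlinarith

lemma nm1_le_denom {n t : ℕ} (h1 : 1 ≤ t) (h2 : t < n) : ((n:ℝ) - 1) ≤ t * ((n:ℝ) - t) := by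
  have ha : (1:ℝ) ≤ t := by exact_mod_cast h1
  have hb : (t:ℝ) ≤ (n:ℝ) - 1 := by
    have : (t:ℝ) + 1 ≤ n := by exact_mod_cast h2
    linarith
  nlinarith

lemma factor_one_le {n t : ℕ} (h1 : 1 ≤ t) (h2 : t < n) :
    1 ≤ 1 + ((n : ℝ) - 1) / (t * ((n : ℝ) - t)) := by
  have := denom_pos h1 h2
  have hn1 : (0:ℝ) ≤ (n:ℝ) - 1 := by
    have : (1:ℝ) ≤ n := by exact_mod_cast h1.trans h2.le
    linarith
  have := div_nonneg hn1 this.le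
  linarith

lemma factor_le_two {n t : ℕ} (h1 : 1 ≤ t) (h2 : t < n) :
    1 + ((n : ℝ) - 1) / (t * ((n : ℝ) - t)) ≤ 2 := by
  have hd := denom_pos h1 h2
  have := nm1_le_denom h1 h2
  have : ((n : ℝ) - 1) / (t * ((n : ℝ) - t)) ≤ 1 := by
    rw [div_le_one hd]; exact this
  linarith

lemma one_le_prod_aux {n : ℕ} {F : Finset ℕ} (h : ∀ t ∈ F, 1 ≤ t ∧ t < n) :
    1 ≤ ∏ t ∈ F, (1 + ((n : ℝ) - 1) / (t * ((n : ℝ) - t))) := by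
  calc (1:ℝ) = ∏ _t ∈ F, 1 := by simp
  _ ≤ _ := Finset.prod_le_prod (by simp) (fun t ht => factor_one_le (h t ht).1 (h t ht).2)

lemma gR_one_le {n s : ℕ} (hs : 1 ≤ s) : 1 ≤ gR n s :=
  one_le_prod_aux fun t ht => by rw [Finset.mem_Ico] at ht; exact ⟨hs.trans ht.1, ht.2⟩

lemma gR_pos {n s : ℕ} (hs : 1 ≤ s) : 0 < gR n s :=
  lt_of_lt_of_le one_pos (gR_one_le hs)

lemma gR_rec {n s : ℕ} (hsn : s < n) :
    gR n s = (1 + ((n : ℝ) - 1) / (s * ((n : ℝ) - s))) * gR n (s + 1) :=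
  Finset.prod_eq_prod_Ico_succ_bot hsn _

lemma gR_anti {n s : ℕ} (hs : 1 ≤ s) (hsn : s ≤ n) : gR n s ≤ gR n 1 := by
  have hsplit : (∏ t ∈ Finset.Ico 1 s, (1 + ((n : ℝ) - 1) / (t * ((n : ℝ) - t)))) * gR n s
      = gR n 1 := Finset.prod_Ico_consecutive _ hs hsn
  have h1 : 1 ≤ ∏ t ∈ Finset.Ico 1 s, (1 + ((n : ℝ) - 1) / (t * ((n : ℝ) - t))) :=
    one_le_prod_aux fun t ht => by rw [Finset.mem_Ico] at ht; constructor <;> omega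
  nlinarith [gR_pos (n := n) hs]

lemma two_le_gR {n s : ℕ} (hn : 2 ≤ n) (hs : 1 ≤ s) (hsn : s < n) : 2 ≤ gR n s := by
  have hmem : n - 1 ∈ Finset.Ico s n := by
    rw [Finset.mem_Ico]; omega
  have key : (2:ℝ) ≤ 1 + ((n : ℝ) - 1) / ((n-1 : ℕ) * ((n : ℝ) - (n-1 : ℕ))) := by
    have h1 : ((n-1 : ℕ) : ℝ) = (n : ℝ) - 1 := by
      have : (1:ℕ) ≤ n := by omega
      push_cast [Nat.cast_sub this]; ring
    have h2 : (n : ℝ) - ((n-1:ℕ) : ℝ) = 1 := by rw [h1]; ring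
    rw [h2, h1, mul_one, div_self (by
      have : (2:ℝ) ≤ n := by exact_mod_cast hn
      linarith)]
    norm_num
  have hrest : 1 ≤ ∏ t ∈ (Finset.Ico s n).erase (n-1), (1 + ((n : ℝ) - 1) / (t * ((n : ℝ) - t))) :=
    one_le_prod_aux fun t ht => by
      have := Finset.mem_of_mem_erase ht
      rw [Finset.mem_Ico] at this; exact ⟨hs.trans this.1, this.2⟩
  have hmul := Finset.mul_prod_erase (Finset.Ico s n)
    (fun t : ℕ => 1 + ((n : ℝ) - 1) / (t * ((n : ℝ) - t))) hmem
  have hfac : (0:ℝ) ≤ 1 + ((n : ℝ) - 1) / ((n-1 : ℕ) * ((n : ℝ) - (n-1 : ℕ))) := by linarith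
  calc (2:ℝ) ≤ 1 + ((n : ℝ) - 1) / ((n-1 : ℕ) * ((n : ℝ) - (n-1 : ℕ))) := key
    _ ≤ _ * ∏ t ∈ (Finset.Ico s n).erase (n-1), (1 + ((n : ℝ) - 1) / (t * ((n : ℝ) - t))) :=
        le_mul_of_one_le_right hfac hrest
    _ = gR n s := by rw [gR]; exact hmul

lemma sum_harm {n : ℕ} (hn : 2 ≤ n) :
    ∑ t ∈ Finset.Ico 1 n, (1:ℝ)/t ≤ 1 + Real.log n := by
  have h1 : Finset.Ico 1 n = Finset.Icc 1 (n-1) := by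
    rw [← Finset.Ico_add_one_right_eq_Icc]; congr 1; omega
  have h2 : ∑ t ∈ Finset.Ico 1 n, (1:ℝ)/t = ((harmonic (n-1) : ℚ) : ℝ) := by
    rw [h1, harmonic_eq_sum_Icc]
    push_cast
    refine Finset.sum_congr rfl fun t _ => ?_
    rw [one_div]
  rw [h2]
  refine (harmonic_le_one_add_log (n-1)).trans ?_
  have : Real.log ((n-1 : ℕ) : ℝ) ≤ Real.log n := by
    apply Real.log_le_log
    · have h0 : (0:ℕ) < n - 1 := by omega
      exact_mod_cast h0
    · exact_mod_cast Nat.sub_le n 1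
  linarith

lemma sum_reflect {n : ℕ} :
    ∑ t ∈ Finset.Ico 1 n, (1:ℝ)/((n:ℝ)-t) = ∑ t ∈ Finset.Ico 1 n, (1:ℝ)/t := by
  refine Finset.sum_nbij' (fun t => n - t) (fun t => n - t)
    (fun t ht => by simp only [Finset.mem_Ico] at ht ⊢; omega)
    (fun t ht => by simp only [Finset.mem_Ico] at ht ⊢; omega)
    (fun t ht => by simp only [Finset.mem_Ico] at ht ⊢; omega)
    (fun t ht => by simp only [Finset.mem_Ico] at ht ⊢; omega)
    (fun t ht => ?_)
  rw [Finset.mem_Ico] at ht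
  have h : ((n - t : ℕ) : ℝ) = (n:ℝ) - t := by
    push_cast [Nat.cast_sub ht.2.le]; ring
  rw [h]

lemma gR_one_bound {n : ℕ} (hn : 2 ≤ n) : gR n 1 ≤ Real.exp (2 + 2 * Real.log n) := by
  have step1 : gR n 1 ≤ ∏ t ∈ Finset.Ico 1 n, Real.exp (((n : ℝ) - 1) / (t * ((n : ℝ) - t))) := by
    unfold gR
    refine Finset.prod_le_prod (fun t ht => ?_) (fun t ht => ?_)
    · rw [Finset.mem_Ico] at ht
      have h1 : (1:ℝ) ≤ t := by exact_mod_cast ht.1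
      have h2 : (t:ℝ) < n := by exact_mod_cast ht.2
      have hd : (0:ℝ) < t * ((n:ℝ) - t) := by nlinarith
      have : (0:ℝ) ≤ ((n:ℝ)-1) / (t * ((n:ℝ)-t)) := by
        apply div_nonneg _ hd.le
        linarith
      linarith
    · have := Real.add_one_le_exp (((n : ℝ) - 1) / (t * ((n : ℝ) - t)))
      linarith
  rw [← Real.exp_sum] at step1
  refine step1.trans (Real.exp_le_exp.2 ?_)
  have key : ∀ t ∈ Finset.Ico 1 n,
      ((n : ℝ) - 1) / (t * ((n : ℝ) - t)) ≤ 1/t + 1/((n:ℝ)-t) := by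
    intro t ht
    rw [Finset.mem_Ico] at ht
    have h1 : (1:ℝ) ≤ t := by exact_mod_cast ht.1
    have h2 : (t:ℝ) + 1 ≤ n := by exact_mod_cast ht.2
    have hd1 : (0:ℝ) < t := by linarith
    have hd2 : (0:ℝ) < (n:ℝ) - t := by linarith
    rw [div_add_div _ _ (ne_of_gt hd1) (ne_of_gt hd2),
      div_le_div_iff₀ (by positivity) (by positivity)]
    ring_nf
    nlinarith
  calc ∑ t ∈ Finset.Ico 1 n, ((n : ℝ) - 1) / (t * ((n : ℝ) - t))
      ≤ ∑ t ∈ Finset.Ico 1 n, (1/t + 1/((n:ℝ)-t)) := Finset.sum_le_sum key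
    _ = (∑ t ∈ Finset.Ico 1 n, (1:ℝ)/t) + ∑ t ∈ Finset.Ico 1 n, (1:ℝ)/((n:ℝ)-t) :=
        Finset.sum_add_distrib
    _ ≤ (1 + Real.log n) + (1 + Real.log n) := by
        rw [sum_reflect]
        have := sum_harm hn
        linarith
    _ = 2 + 2 * Real.log n := by ring

/-- the core supermartingale inequality -/
lemma core {n s : ℕ} (hn : 2 ≤ n) (hs : 1 ≤ s) (hsn : s < n) :
    (s:ℝ) * ((n:ℝ) - s) * (gR n (s+1) - 1)
      + ((n:ℝ) * ((n:ℝ)-1) - (s:ℝ) * ((n:ℝ)-s)) * (gR n s - 1)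
    ≤ ((n:ℝ) * ((n:ℝ)-1) - ((n:ℝ)-1)/8) * (gR n s - 1) := by
  have hrec := gR_rec (n := n) (s := s) hsn
  have hfac2 := factor_le_two hs hsn
  have hG1 : 1 ≤ gR n (s+1) := gR_one_le (by omega)
  set G := gR n (s+1) with hGdef
  set P := gR n s with hPdef
  set a := (s:ℝ) * ((n:ℝ) - s) with hadef
  have ha : 0 < a := denom_pos hs hsn
  have hrel : a * P = (a + ((n:ℝ)-1)) * G := by
    rw [hrec]; field_simp
  have hP2 : P ≤ 2 * G := by
    rw [hrec]; nlinarith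
  have h2n : (2:ℝ) ≤ n := by exact_mod_cast hn
  have hP1 : 1 ≤ P := by nlinarith
  nlinarith [mul_nonneg (by linarith : (0:ℝ) ≤ (n:ℝ)-1) (by linarith : (0:ℝ) ≤ G)]

/-! ### Counting pairs -/

lemma card_offdiag {n : ℕ} :
    ((Finset.univ : Finset (Fin n × Fin n)).filter fun p => ¬ (p.1 = p.2)).card = n * (n-1) := by
  have hdiag : ((Finset.univ : Finset (Fin n × Fin n)).filter fun p => p.1 = p.2)
      = (Finset.univ : Finset (Fin n)).image (fun a => (a, a)) := by
    ext ⟨a, b⟩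
    simp only [Finset.mem_filter, Finset.mem_univ, true_and, Finset.mem_image]
    constructor
    · rintro rfl; exact ⟨a, rfl⟩
    · rintro ⟨c, h⟩
      rw [Prod.mk.injEq] at h
      rw [← h.1, ← h.2]
  have hdcard : ((Finset.univ : Finset (Fin n × Fin n)).filter fun p => p.1 = p.2).card = n := by
    rw [hdiag, Finset.card_image_of_injective _ (fun a b h => by
      rw [Prod.mk.injEq] at h; exact h.1)]
    simp
  have htot := Finset.card_filter_add_card_filter_not
    (s := (Finset.univ : Finset (Fin n × Fin n))) (p := fun p => p.1 = p.2)
  have huniv : (Finset.univ : Finset (Fin n × Fin n)).card = n * n := by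
    simp
  have hnn : n * n - n = n * (n - 1) := by
    cases n with
    | zero => simp
    | succ m => simp only [Nat.succ_sub_one, Nat.succ_mul, Nat.mul_succ]; omega
  omega

/-- partition of a measure over the fibers of a finite-valued map -/
lemma part {Ω : Type} [MeasurableSpace Ω] (μ : Measure Ω) {α : Type} [Fintype α]
    [DecidableEq α] (f : Ω → α) (hf : ∀ a : α, MeasurableSet (f ⁻¹' {a}))
    {s : Set Ω} (hs : MeasurableSet s) :
    μ s = ∑ a : α, μ (s ∩ f ⁻¹' {a}) := by
  have h1 : s = ⋃ a ∈ (Finset.univ : Finset α), s ∩ f ⁻¹' {a} := by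
    ext ω; simp
  have h2 : μ s = μ (⋃ a ∈ (Finset.univ : Finset α), s ∩ f ⁻¹' {a}) := by rw [← h1]
  rw [h2, measure_biUnion_finset ?_ (fun b _ => hs.inter (hf b))]
  intro a _ b _ hab
  refine Set.disjoint_left.2 ?_
  rintro ω ⟨-, ha⟩ ⟨-, hb⟩
  exact hab (by rw [← ha, ← hb])

end Stmt3Aux

set_option maxHeartbeats 2000000 in
open Stmt3Aux in
/-- One-way epidemic (maximum propagation): for every `γ > 0` there is a constant
`C > 0` such that for every `n ≥ 2`, under the uniform pairwise scheduler
(`X k`, `k ≥ 1`, i.i.d. uniform on ordered pairs of distinct agents of `Fin n`),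
starting from any initial values `v₀ : Fin n → ℕ` and updating by
"the responder takes the maximum of the two values", the number `T` of interactions
until every agent holds `max_b v₀(b)` satisfies `P(T > C·n·log n) ≤ n^{-γ}`. -/
theorem stmt_3 :
    ∀ γ : ℝ, 0 < γ → ∃ C : ℝ, 0 < C ∧
      ∀ (n : ℕ), 2 ≤ n →
      ∀ (Ω : Type) (_ : MeasurableSpace Ω) (μ : Measure Ω), IsProbabilityMeasure μ →
      ∀ (X : ℕ → Ω → Fin n × Fin n), (∀ k, Measurable (X k)) →
        iIndepFun (fun k => X (k + 1)) μ →
        (∀ k, 1 ≤ k →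
          Measure.map (X k) μ = uniformOn {p : Fin n × Fin n | p.1 ≠ p.2}) →
      ∀ (v₀ : Fin n → ℕ) (v : ℕ → Ω → Fin n → ℕ),
        (∀ ω a, v 0 ω a = v₀ a) →
        (∀ k ω a, v (k + 1) ω a =
          if a = (X (k + 1) ω).2
          then max (v k ω (X (k + 1) ω).1) (v k ω (X (k + 1) ω).2)
          else v k ω a) →
      ∀ (T : Ω → ℕ),
        (∀ ω, T ω = sInf {k | ∀ a, v k ω a = Finset.univ.sup v₀}) →
        μ {ω | C * n * Real.log n < (T ω : ℝ)} ≤ ENNReal.ofReal ((n : ℝ) ^ (-γ)) := by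
  classical
  intro γ hγ
  refine ⟨8*γ + 64, by linarith, ?_⟩
  intro n hn Ω mΩ μ hμ X hX hind hmap v₀ v hv0 hrec T hT
  haveI : Nonempty (Fin n) := ⟨⟨0, by omega⟩⟩
  set M := Finset.univ.sup v₀ with hM
  obtain ⟨a₀, -, ha₀⟩ := Finset.exists_mem_eq_sup (Finset.univ : Finset (Fin n))
    Finset.univ_nonempty v₀
  -- values are bounded by M
  have hvle : ∀ k ω a, v k ω a ≤ M := by
    intro k
    induction k with
    | zero => intro ω a; rw [hv0]; exact Finset.le_sup (Finset.mem_univ a)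
    | succ k ih =>
      intro ω a
      rw [hrec]
      split_ifs
      · exact max_le (ih ω _) (ih ω _)
      · exact ih ω a
  -- the maximizer always holds M
  have hvmax : ∀ k ω, v k ω a₀ = M := by
    intro k
    induction k with
    | zero => intro ω; rw [hv0, hM, ha₀]
    | succ k ih =>
      intro ω
      rw [hrec]
      split_ifs with hj
      · rw [← hj, ih ω]
        exact max_eq_right (hvle k ω _)
      · exact ih ω
  -- the informed set
  set S₀ : Finset (Fin n) := Finset.univ.filter (fun a => v₀ a = M) with hS₀
  set Ifun : ℕ → Ω → Finset (Fin n) :=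
    fun k ω => Finset.univ.filter (fun a => v k ω a = M) with hIfun
  have hIstep : ∀ k ω, Ifun (k+1) ω = eStep (Ifun k ω) (X (k+1) ω) := by
    intro k ω
    ext a
    simp only [hIfun, Finset.mem_filter, Finset.mem_univ, true_and]
    by_cases hj : a = (X (k+1) ω).2
    · rw [hrec k ω a, if_pos hj]
      unfold eStep
      constructor
      · intro hmax
        rcases max_choice (v k ω (X (k + 1) ω).1) (v k ω (X (k + 1) ω).2) with hc | hc
        · have h1 : v k ω (X (k + 1) ω).1 = M := by rw [← hc, hmax]
          rw [if_pos (by simp [h1])]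
          rw [hj]; exact Finset.mem_insert_self _ _
        · have h2 : v k ω (X (k + 1) ω).2 = M := by rw [← hc, hmax]
          split_ifs with h1
          · rw [hj]; exact Finset.mem_insert_self _ _
          · simp [hj, h2]
      · intro hmem
        split_ifs at hmem with h1
        · simp only [Finset.mem_filter, Finset.mem_univ, true_and] at h1
          have := le_max_left (v k ω (X (k + 1) ω).1) (v k ω (X (k + 1) ω).2)
          have hle := max_le (hvle k ω (X (k + 1) ω).1) (hvle k ω (X (k + 1) ω).2)
          omega
        · simp only [Finset.mem_filter, Finset.mem_univ, true_and, ← hj] at hmem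
          rw [← hj, hmem]
          exact max_eq_right (hvle k ω _)
    · rw [hrec k ω a, if_neg hj]
      unfold eStep
      split_ifs with h1
      · rw [Finset.mem_insert]
        simp only [Finset.mem_filter, Finset.mem_univ, true_and]
        constructor
        · intro h; exact Or.inr h
        · rintro (h | h)
          · exact absurd h hj
          · exact h
      · simp only [Finset.mem_filter, Finset.mem_univ, true_and]
  have hI0 : ∀ ω, Ifun 0 ω = S₀ := by
    intro ω
    ext a
    simp [hIfun, hS₀, hv0]
  have hIJ : ∀ k ω, Ifun k ω = eJ S₀ k (fun i : Fin k => X (i+1) ω) := by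
    intro k
    induction k with
    | zero => intro ω; rw [hI0]; rfl
    | succ k ih =>
      intro ω
      rw [hIstep k ω, ih ω]
      show eStep (eJ S₀ k (fun i : Fin k => X (i+1) ω)) (X (k+1) ω)
          = eJ S₀ (k+1) (fun i : Fin (k+1) => X (i+1) ω)
      simp [eJ, Fin.coe_castSucc, Fin.val_last]
  have ha₀mem : ∀ k ω, a₀ ∈ Ifun k ω := by
    intro k ω
    simp only [hIfun, Finset.mem_filter, Finset.mem_univ, true_and]
    exact hvmax k ω
  -- measurability of informed-set events
  have hTupMeas : ∀ k, Measurable (fun ω (i : Fin k) => X (i+1) ω) :=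
    fun k => measurable_pi_lambda _ (fun i => hX _)
  have hmeasE : ∀ (k : ℕ) (Sset : Set (Finset (Fin n))),
      MeasurableSet {ω | Ifun k ω ∈ Sset} := by
    intro k Sset
    have heq : {ω | Ifun k ω ∈ Sset}
        = (fun ω (i : Fin k) => X (i+1) ω) ⁻¹' {f | eJ S₀ k f ∈ Sset} := by
      ext ω
      simp only [Set.mem_setOf_eq, Set.mem_preimage, hIJ k ω]
    rw [heq]
    exact hTupMeas k MeasurableSet.of_discrete
  -- independence of the informed set from the next interaction
  letI : MeasurableSpace (Finset (Fin n)) := ⊤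
  have hind2 : ∀ (k : ℕ) (S : Finset (Fin n)) (x : Fin n × Fin n),
      μ ({ω | Ifun k ω = S} ∩ {ω | X (k+1) ω = x})
        = μ {ω | Ifun k ω = S} * μ {ω | X (k+1) ω = x} := by
    intro k S x
    have hdisj : Disjoint (Finset.range k) ({k} : Finset ℕ) := by simp
    have h1 := hind.indepFun_finset (Finset.range k) {k} hdisj (fun i => hX _)
    have h2 := h1.comp
      (φ := fun g : ((i : (Finset.range k : Finset ℕ)) → Fin n × Fin n) =>
        eJ S₀ k (fun i : Fin k => g ⟨(i : ℕ), Finset.mem_range.2 i.2⟩))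
      (ψ := fun g : ((i : ({k} : Finset ℕ)) → Fin n × Fin n) =>
        g ⟨k, Finset.mem_singleton_self k⟩)
      Measurable.of_discrete (measurable_pi_apply _ : Measurable fun g : ((i : ({k} : Finset ℕ)) → Fin n × Fin n) =>
        g ⟨k, Finset.mem_singleton_self k⟩)
    have h3 := (indepFun_iff_measure_inter_preimage_eq_mul.1 h2) {S} {x}
      MeasurableSet.of_discrete (measurableSet_singleton x)
    have hL : ((fun g : ((i : (Finset.range k : Finset ℕ)) → Fin n × Fin n) =>
          eJ S₀ k (fun i : Fin k => g ⟨(i : ℕ), Finset.mem_range.2 i.2⟩))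
          ∘ (fun ω (i : (Finset.range k : Finset ℕ)) => X (i+1) ω)) ⁻¹' {S}
        = {ω | Ifun k ω = S} := by
      ext ω
      simp only [Set.mem_preimage, Function.comp_apply, Set.mem_singleton_iff,
        Set.mem_setOf_eq]
      rw [hIJ k ω]
    have hR : ((fun g : ((i : ({k} : Finset ℕ)) → Fin n × Fin n) =>
          g ⟨k, Finset.mem_singleton_self k⟩)
          ∘ (fun ω (i : ({k} : Finset ℕ)) => X (i+1) ω)) ⁻¹' {x}
        = {ω | X (k+1) ω = x} := by
      ext ω
      simp only [Set.mem_preimage, Function.comp_apply, Set.mem_singleton_iff,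
        Set.mem_setOf_eq]
    rw [hL, hR] at h3
    exact h3
  -- law of each interaction
  set D : Set (Fin n × Fin n) := {p | p.1 ≠ p.2} with hD
  set N' : ENNReal := ((n * (n-1) : ℕ) : ENNReal) with hN'
  have hcountD : Measure.count D = N' := by
    have hDF : D = ↑((Finset.univ : Finset (Fin n × Fin n)).filter fun p => ¬ (p.1 = p.2)) := by
      ext p
      simp [hD]
    rw [hDF, Measure.count_apply_finset, card_offdiag]
  have hXlaw : ∀ (k : ℕ) (x : Fin n × Fin n),
      μ {ω | X (k+1) ω = x} = if x.1 ≠ x.2 then N'⁻¹ else 0 := by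
    intro k x
    have h0 : {ω | X (k+1) ω = x} = X (k+1) ⁻¹' {x} := rfl
    rw [h0, ← Measure.map_apply (hX _) (measurableSet_singleton x), hmap (k+1) (by omega)]
    have hunif : uniformOn D {x} = (Measure.count D)⁻¹ * Measure.count (D ∩ {x}) := by
      rw [uniformOn, cond_apply MeasurableSet.of_discrete]
    rw [hunif, hcountD]
    by_cases hx : x.1 ≠ x.2
    · have hDx : D ∩ {x} = {x} := by
        ext y
        constructor
        · exact fun h => h.2
        · intro h
          rw [Set.mem_singleton_iff] at h
          subst h
          exact ⟨hx, rfl⟩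
      rw [if_pos hx, hDx, Measure.count_singleton, mul_one]
    · have hDx : D ∩ {x} = ∅ := by
        ext y
        constructor
        · rintro ⟨h1, h2⟩
          rw [Set.mem_singleton_iff] at h2
          subst h2
          exact absurd h1 hx
        · intro h
          exact absurd h (Set.notMem_empty y)
      rw [if_neg hx, hDx, measure_empty, mul_zero]
  -- the potential and its expectation
  set hpot : ℕ → ENNReal := fun s => ENNReal.ofReal (gR n s - 1) with hhpot
  have hN0 : N' ≠ 0 := by
    rw [hN']
    simp only [ne_eq, Nat.cast_eq_zero]
    have h1 : 0 < n * (n-1) := Nat.mul_pos (by omega) (by omega)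
    omega
  have hNtop : N' ≠ ⊤ := by rw [hN']; exact ENNReal.natCast_ne_top _
  set βr : ℝ := 1 - 1/(8*(n:ℝ)) with hβr
  have hn2 : (2:ℝ) ≤ (n:ℝ) := by exact_mod_cast hn
  have hβr0 : 0 ≤ βr := by
    rw [hβr]
    have h1 : 1/(8*(n:ℝ)) ≤ 1 := by
      rw [div_le_one (by positivity)]
      nlinarith
    linarith
  have hinner : ∀ (k : ℕ) (S : Finset (Fin n)), a₀ ∈ S →
      (∑ x : Fin n × Fin n, μ {ω | X (k+1) ω = x} * hpot ((eStep S x).card))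
        ≤ ENNReal.ofReal βr * hpot S.card := by
    intro k S ha₀S
    by_cases hcard : S.card = n
    · have hSuniv : S = Finset.univ := by
        apply Finset.eq_univ_of_card
        simpa using hcard
      have hzero : hpot ((Finset.univ : Finset (Fin n)).card) = 0 := by
        simp only [hhpot, Finset.card_univ, Fintype.card_fin]
        have hgnn : gR n n = 1 := by rw [gR]; simp
        rw [hgnn]
        simp
      have hz : ∀ x : Fin n × Fin n, hpot ((eStep S x).card) = 0 := by
        intro x
        rw [hSuniv, eStep_univ]
        exact hzero
      simp only [hz, mul_zero, Finset.sum_const_zero]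
      exact zero_le
    · have hs1 : 1 ≤ S.card := Finset.card_pos.2 ⟨a₀, ha₀S⟩
      have hsn : S.card < n := by
        have := Finset.card_le_univ S
        simp only [Finset.card_univ, Fintype.card_fin] at this
        omega
      set F := Finset.univ.filter (fun x : Fin n × Fin n => ¬ (x.1 = x.2)) with hF
      have hsum1 : (∑ x : Fin n × Fin n, μ {ω | X (k+1) ω = x} * hpot ((eStep S x).card))
          = N'⁻¹ * ∑ x ∈ F, hpot ((eStep S x).card) := by
        rw [hF, Finset.sum_filter, Finset.mul_sum]
        refine Finset.sum_congr rfl fun x _ => ?_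
        rw [hXlaw k x]
        by_cases hx : x.1 = x.2
        · rw [if_neg (by simpa using hx), if_neg (by simpa using hx), zero_mul, mul_zero]
        · rw [if_pos (by simpa using hx), if_pos (by simpa using hx)]
      set good := fun x : Fin n × Fin n => x.1 ∈ S ∧ x.2 ∉ S with hgood
      have hFsplit := Finset.sum_filter_add_sum_filter_not F good
        (fun x => hpot ((eStep S x).card))
      have hgoodset : F.filter good = S ×ˢ Sᶜ := by
        ext x
        simp only [hF, hgood, Finset.mem_filter, Finset.mem_univ, true_and,
          Finset.mem_product, Finset.mem_compl]
        constructor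
        · rintro ⟨-, h⟩; exact h
        · rintro ⟨h1, h2⟩
          refine ⟨?_, h1, h2⟩
          intro he
          rw [he] at h1
          exact h2 h1
      have hcprod : (S ×ˢ Sᶜ).card = S.card * (n - S.card) := by
        rw [Finset.card_product, Finset.card_compl, Fintype.card_fin]
      have hsumgood : ∑ x ∈ F.filter good, hpot ((eStep S x).card)
          = ((S.card * (n - S.card) : ℕ) : ENNReal) * hpot (S.card + 1) := by
        rw [hgoodset]
        have hcongr : ∀ x ∈ S ×ˢ Sᶜ, hpot ((eStep S x).card) = hpot (S.card + 1) := by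
          intro x hx
          rw [Finset.mem_product, Finset.mem_compl] at hx
          rw [card_eStep_of_good hx.1 hx.2]
        rw [Finset.sum_congr rfl hcongr, Finset.sum_const, hcprod, nsmul_eq_mul]
      have hcbad : (F.filter (fun x => ¬ good x)).card
          = n * (n-1) - S.card * (n - S.card) := by
        have hcards := Finset.card_filter_add_card_filter_not
          (s := F) (p := good)
        have hFcard : F.card = n * (n-1) := card_offdiag
        rw [hgoodset, hcprod] at hcards
        omega
      have hsumbad : ∑ x ∈ F.filter (fun x => ¬ good x), hpot ((eStep S x).card)
          = ((n * (n-1) - S.card * (n - S.card) : ℕ) : ENNReal) * hpot S.card := by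
        have hcongr : ∀ x ∈ F.filter (fun x => ¬ good x),
            hpot ((eStep S x).card) = hpot S.card := by
          intro x hx
          rw [Finset.mem_filter] at hx
          rw [card_eStep_of_bad (by rw [hgood] at hx; exact hx.2)]
        rw [Finset.sum_congr rfl hcongr, Finset.sum_const, hcbad, nsmul_eq_mul]
      have hab : S.card * (n - S.card) ≤ n * (n-1) :=
        Nat.mul_le_mul (by omega) (by omega)
      have hg1 : (0:ℝ) ≤ gR n (S.card + 1) - 1 := by
        have := gR_one_le (n := n) (s := S.card + 1) (by omega)
        linarith
      have hg0 : (0:ℝ) ≤ gR n S.card - 1 := by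
        have := gR_one_le (n := n) (s := S.card) hs1
        linarith
      have hkey : ((S.card * (n - S.card) : ℕ) : ENNReal) * hpot (S.card + 1)
            + ((n * (n-1) - S.card * (n - S.card) : ℕ) : ENNReal) * hpot S.card
          ≤ N' * (ENNReal.ofReal βr * hpot S.card) := by
        rw [hhpot, hN']
        rw [← ENNReal.ofReal_natCast (S.card * (n - S.card)),
          ← ENNReal.ofReal_natCast (n * (n-1) - S.card * (n - S.card)),
          ← ENNReal.ofReal_natCast (n * (n-1)),
          ← ENNReal.ofReal_mul (by positivity),
          ← ENNReal.ofReal_mul (by positivity),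
          ← ENNReal.ofReal_mul hβr0,
          ← ENNReal.ofReal_mul (by positivity),
          ← ENNReal.ofReal_add (mul_nonneg (by positivity) hg1)
            (mul_nonneg (by positivity) hg0)]
        apply ENNReal.ofReal_le_ofReal
        rw [Nat.cast_sub hab, Nat.cast_mul, Nat.cast_mul,
          Nat.cast_sub hsn.le, Nat.cast_sub (by omega : 1 ≤ n), Nat.cast_one]
        have hfld : (n:ℝ) * ((n:ℝ)-1) * (βr * (gR n S.card - 1))
            = ((n:ℝ) * ((n:ℝ)-1) - ((n:ℝ)-1)/8) * (gR n S.card - 1) := by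
          rw [hβr]
          field_simp
        rw [hfld]
        exact core hn hs1 hsn
      calc (∑ x : Fin n × Fin n, μ {ω | X (k+1) ω = x} * hpot ((eStep S x).card))
          = N'⁻¹ * ∑ x ∈ F, hpot ((eStep S x).card) := hsum1
        _ = N'⁻¹ * (((S.card * (n - S.card) : ℕ) : ENNReal) * hpot (S.card + 1)
              + ((n * (n-1) - S.card * (n - S.card) : ℕ) : ENNReal) * hpot S.card) := by
            rw [← hFsplit, hsumgood, hsumbad]
        _ ≤ N'⁻¹ * (N' * (ENNReal.ofReal βr * hpot S.card)) := mul_le_mul_right hkey _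
        _ = ENNReal.ofReal βr * hpot S.card := by
            rw [← mul_assoc, ENNReal.inv_mul_cancel hN0 hNtop, one_mul]
  have hmeasEq : ∀ (k : ℕ) (S : Finset (Fin n)), MeasurableSet {ω | Ifun k ω = S} :=
    fun k S => hmeasE k {S}
  set A : ℕ → ENNReal :=
    fun k => ∑ S : Finset (Fin n), μ {ω | Ifun k ω = S} * hpot S.card with hA
  -- one-step recursion for the expected potential
  have hstep : ∀ k, A (k+1) ≤ ENNReal.ofReal βr * A k := by
    intro k
    set fC : Ω → Finset (Fin n) × (Fin n × Fin n) :=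
      fun ω => (Ifun k ω, X (k+1) ω) with hfC
    have hfCpre : ∀ c : Finset (Fin n) × (Fin n × Fin n),
        fC ⁻¹' {c} = {ω | Ifun k ω = c.1} ∩ {ω | X (k+1) ω = c.2} := by
      intro c
      ext ω
      simp only [hfC, Set.mem_preimage, Set.mem_singleton_iff, Prod.ext_iff,
        Set.mem_inter_iff, Set.mem_setOf_eq]
    have hfCmeas : ∀ c, MeasurableSet (fC ⁻¹' {c}) := by
      intro c
      rw [hfCpre]
      exact (hmeasEq k c.1).inter (hX (k+1) (measurableSet_singleton c.2))
    have hAk1 : A (k+1) = ∑ c : Finset (Fin n) × (Fin n × Fin n),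
        μ (fC ⁻¹' {c}) * hpot ((eStep c.1 c.2).card) := by
      calc A (k+1)
          = ∑ S' : Finset (Fin n), μ {ω | Ifun (k+1) ω = S'} * hpot S'.card := rfl
        _ = ∑ S' : Finset (Fin n), ∑ c : Finset (Fin n) × (Fin n × Fin n),
            μ ({ω | Ifun (k+1) ω = S'} ∩ fC ⁻¹' {c}) * hpot S'.card := by
            refine Finset.sum_congr rfl fun S' _ => ?_
            rw [part μ fC hfCmeas (hmeasEq (k+1) S'), Finset.sum_mul]
        _ = ∑ c : Finset (Fin n) × (Fin n × Fin n), ∑ S' : Finset (Fin n),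
            (if eStep c.1 c.2 = S' then μ (fC ⁻¹' {c}) * hpot S'.card else 0) := by
            rw [Finset.sum_comm]
            refine Finset.sum_congr rfl fun c _ => Finset.sum_congr rfl fun S' _ => ?_
            have hset : {ω | Ifun (k+1) ω = S'} ∩ fC ⁻¹' {c}
                = if eStep c.1 c.2 = S' then fC ⁻¹' {c} else (∅ : Set Ω) := by
              rw [hfCpre]
              ext ω
              split_ifs with hif
              · simp only [Set.mem_inter_iff, Set.mem_setOf_eq]
                constructor
                · rintro ⟨-, h⟩; exact h
                · intro h
                  refine ⟨?_, h⟩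
                  rw [hIstep k ω, h.1, h.2, hif]
              · simp only [Set.mem_inter_iff, Set.mem_setOf_eq,
                  Set.mem_empty_iff_false, iff_false, not_and]
                intro h1 h2
                intro h3
                apply hif
                rw [← h1, hIstep k ω, h2, h3]
            rw [hset, apply_ite μ, measure_empty, ite_mul, zero_mul]
        _ = ∑ c : Finset (Fin n) × (Fin n × Fin n),
            μ (fC ⁻¹' {c}) * hpot ((eStep c.1 c.2).card) := by
            refine Finset.sum_congr rfl fun c _ => ?_
            rw [Finset.sum_ite_eq]
            simp
    have h2 : A (k+1) = ∑ S : Finset (Fin n), μ {ω | Ifun k ω = S}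
        * ∑ x : Fin n × Fin n, μ {ω | X (k+1) ω = x} * hpot ((eStep S x).card) := by
      rw [hAk1, Fintype.sum_prod_type]
      refine Finset.sum_congr rfl fun S _ => ?_
      rw [Finset.mul_sum]
      refine Finset.sum_congr rfl fun x _ => ?_
      rw [hfCpre, hind2 k S x, mul_assoc]
    rw [h2]
    calc ∑ S : Finset (Fin n), μ {ω | Ifun k ω = S}
        * ∑ x : Fin n × Fin n, μ {ω | X (k+1) ω = x} * hpot ((eStep S x).card)
        ≤ ∑ S : Finset (Fin n),
          ENNReal.ofReal βr * (μ {ω | Ifun k ω = S} * hpot S.card) := ?_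
      _ = ENNReal.ofReal βr * A k := (Finset.mul_sum _ _ _).symm
    refine Finset.sum_le_sum fun S _ => ?_
    by_cases ha₀S : a₀ ∈ S
    · calc μ {ω | Ifun k ω = S}
          * ∑ x : Fin n × Fin n, μ {ω | X (k+1) ω = x} * hpot ((eStep S x).card)
          ≤ μ {ω | Ifun k ω = S} * (ENNReal.ofReal βr * hpot S.card) :=
            mul_le_mul_right (hinner k S ha₀S) _
        _ = ENNReal.ofReal βr * (μ {ω | Ifun k ω = S} * hpot S.card) := by ring
    · have hem : {ω | Ifun k ω = S} = ∅ := by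
        ext ω
        simp only [Set.mem_setOf_eq, Set.mem_empty_iff_false, iff_false]
        intro h
        exact ha₀S (h ▸ ha₀mem k ω)
      rw [hem, measure_empty, zero_mul, zero_mul, mul_zero]
  -- initial bound
  have ha₀S₀ : a₀ ∈ S₀ := by
    rw [hS₀]
    exact Finset.mem_filter.2 ⟨Finset.mem_univ _, by rw [hM, ha₀]⟩
  have hA0 : A 0 ≤ ENNReal.ofReal (gR n 1) := by
    show ∑ S : Finset (Fin n), μ {ω | Ifun 0 ω = S} * hpot S.card
      ≤ ENNReal.ofReal (gR n 1)
    have hzero : ∀ S ∈ (Finset.univ : Finset (Finset (Fin n))), S ≠ S₀ →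
        μ {ω | Ifun 0 ω = S} * hpot S.card = 0 := by
      intro S _ hS
      have hem : {ω | Ifun 0 ω = S} = ∅ := by
        ext ω
        simp only [Set.mem_setOf_eq, Set.mem_empty_iff_false, iff_false, hI0 ω]
        exact fun h => hS h.symm
      rw [hem, measure_empty, zero_mul]
    rw [Finset.sum_eq_single S₀ hzero
      (fun h => absurd (Finset.mem_univ S₀) h)]
    have huniv : {ω | Ifun 0 ω = S₀} = Set.univ := by
      ext ω
      simp [hI0 ω]
    rw [huniv, measure_univ, one_mul, hhpot]
    apply ENNReal.ofReal_le_ofReal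
    have hs01 : 1 ≤ S₀.card := Finset.card_pos.2 ⟨a₀, ha₀S₀⟩
    have hs0n : S₀.card ≤ n := by
      have := Finset.card_le_univ S₀
      simpa using this
    have := gR_anti (n := n) hs01 hs0n
    linarith
  -- iterate
  have hAm : ∀ k, A k ≤ (ENNReal.ofReal βr)^k * ENNReal.ofReal (gR n 1) := by
    intro k
    induction k with
    | zero => simpa using hA0
    | succ k ih =>
      calc A (k+1) ≤ ENNReal.ofReal βr * A k := hstep k
        _ ≤ ENNReal.ofReal βr * ((ENNReal.ofReal βr)^k * ENNReal.ofReal (gR n 1)) :=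
            mul_le_mul_right ih _
        _ = (ENNReal.ofReal βr)^(k+1) * ENNReal.ofReal (gR n 1) := by
            rw [pow_succ]; ring
  -- event chain
  set m := ⌊(8*γ + 64) * n * Real.log n⌋₊ with hm
  have hlogpos : 0 < Real.log n := Real.log_pos (by exact_mod_cast (by omega : (1:ℕ) < n))
  have hCnn : 0 ≤ (8*γ + 64) * n * Real.log n :=
    mul_nonneg (mul_nonneg (by linarith) (by positivity)) hlogpos.le
  have hincl : {ω | (8*γ + 64) * (n:ℝ) * Real.log n < (T ω : ℝ)}
      ⊆ {ω | ¬ (Ifun m ω = Finset.univ)} := by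
    intro ω hω
    simp only [Set.mem_setOf_eq] at hω ⊢
    intro huniv
    have hall : ∀ a, v m ω a = M := by
      intro a
      have hmem : a ∈ Ifun m ω := huniv ▸ Finset.mem_univ a
      simpa [hIfun] using hmem
    have hTm : T ω ≤ m := by
      rw [hT ω]
      exact Nat.sInf_le hall
    have h1 : (T ω : ℝ) ≤ m := by exact_mod_cast hTm
    have h2 : (m : ℝ) ≤ (8*γ + 64) * n * Real.log n := Nat.floor_le hCnn
    linarith
  have hmono : μ {ω | (8*γ + 64) * (n:ℝ) * Real.log n < (T ω : ℝ)}
      ≤ μ {ω | ¬ (Ifun m ω = Finset.univ)} := measure_mono hincl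
  have hlast : μ {ω | ¬ (Ifun m ω = Finset.univ)} ≤ A m := by
    have hmeasne : MeasurableSet {ω | ¬ (Ifun m ω = Finset.univ)} :=
      hmeasE m {S | ¬ (S = Finset.univ)}
    rw [part μ (Ifun m) (fun S => hmeasEq m S) hmeasne]
    show _ ≤ ∑ S : Finset (Fin n), μ {ω | Ifun m ω = S} * hpot S.card
    refine Finset.sum_le_sum fun S _ => ?_
    by_cases hSuniv : S = Finset.univ
    · have hem : {ω | ¬ (Ifun m ω = Finset.univ)} ∩ (Ifun m) ⁻¹' {S} = ∅ := by
        ext ω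
        simp only [Set.mem_inter_iff, Set.mem_setOf_eq, Set.mem_preimage,
          Set.mem_singleton_iff, Set.mem_empty_iff_false, iff_false, not_and]
        intro h1 h2
        exact h1 (by rw [h2, hSuniv])
      rw [hem, measure_empty]
      exact zero_le
    · by_cases hS0 : a₀ ∈ S
      · have hsub : {ω | ¬ (Ifun m ω = Finset.univ)} ∩ (Ifun m) ⁻¹' {S}
            ⊆ {ω | Ifun m ω = S} := fun ω h => h.2
        have h1pot : 1 ≤ hpot S.card := by
          rw [hhpot]
          have hs1 : 1 ≤ S.card := Finset.card_pos.2 ⟨a₀, hS0⟩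
          have hsn : S.card < n := by
            have hle : S.card ≤ n := by
              have := Finset.card_le_univ S
              simpa using this
            rcases lt_or_eq_of_le hle with h | h
            · exact h
            · exact absurd (Finset.eq_univ_of_card S (by simpa using h)) hSuniv
          have := two_le_gR hn hs1 hsn
          rw [show (1:ENNReal) = ENNReal.ofReal 1 by simp]
          exact ENNReal.ofReal_le_ofReal (by linarith)
        calc μ ({ω | ¬ (Ifun m ω = Finset.univ)} ∩ (Ifun m) ⁻¹' {S})
            ≤ μ {ω | Ifun m ω = S} := measure_mono hsub
          _ = μ {ω | Ifun m ω = S} * 1 := (mul_one _).symm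
          _ ≤ μ {ω | Ifun m ω = S} * hpot S.card := mul_le_mul_right h1pot _
      · have hem : (Ifun m) ⁻¹' {S} = (∅ : Set Ω) := by
          ext ω
          simp only [Set.mem_preimage, Set.mem_singleton_iff,
            Set.mem_empty_iff_false, iff_false]
          intro h
          exact hS0 (h ▸ ha₀mem m ω)
        calc μ ({ω | ¬ (Ifun m ω = Finset.univ)} ∩ (Ifun m) ⁻¹' {S})
            ≤ μ ((Ifun m) ⁻¹' {S}) := measure_mono Set.inter_subset_right
          _ = 0 := by rw [hem, measure_empty]
          _ ≤ _ := zero_le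
  -- final numeric computation
  refine le_trans hmono (le_trans hlast (le_trans (hAm m) ?_))
  have hofr : (ENNReal.ofReal βr)^m * ENNReal.ofReal (gR n 1)
      = ENNReal.ofReal (βr^m * gR n 1) := by
    rw [← ENNReal.ofReal_pow hβr0, ← ENNReal.ofReal_mul (pow_nonneg hβr0 m)]
  rw [hofr]
  apply ENNReal.ofReal_le_ofReal
  have hg1b := gR_one_bound hn
  have hβexp : βr^m ≤ Real.exp (-((m:ℝ) / (8*(n:ℝ)))) := by
    have h1 : βr ≤ Real.exp (-(1/(8*(n:ℝ)))) := by
      have := Real.add_one_le_exp (-(1/(8*(n:ℝ))))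
      rw [hβr]
      linarith
    calc βr^m ≤ (Real.exp (-(1/(8*(n:ℝ)))))^m := pow_le_pow_left₀ hβr0 h1 m
      _ = Real.exp (-((m:ℝ)/(8*(n:ℝ)))) := by
        rw [← Real.exp_nat_mul]
        congr 1
        field_simp
  have hrpow : (n:ℝ)^(-γ) = Real.exp ((-γ) * Real.log n) := by
    rw [Real.rpow_def_of_pos (by positivity), mul_comm]
  have hgR1pos : (0:ℝ) < gR n 1 := gR_pos le_rfl
  have hmge : (8*γ + 64) * (n:ℝ) * Real.log n - 1 < (m:ℝ) := by
    have := Nat.lt_floor_add_one ((8*γ + 64) * (n:ℝ) * Real.log n)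
    rw [hm]
    linarith
  have hlog2 : (0.6931471803 : ℝ) < Real.log n :=
    lt_of_lt_of_le Real.log_two_gt_d9 (Real.log_le_log two_pos (by exact_mod_cast hn))
  have hdiv : 2 + 2*Real.log n + γ * Real.log n ≤ (m:ℝ)/(8*(n:ℝ)) := by
    rw [le_div_iff₀ (by positivity)]
    nlinarith [mul_le_mul_of_nonneg_left hlog2.le (by linarith : (0:ℝ) ≤ (n:ℝ)),
      mul_nonneg hγ.le hlogpos.le, hγ.le]
  calc βr^m * gR n 1
      ≤ Real.exp (-((m:ℝ)/(8*(n:ℝ)))) * Real.exp (2 + 2*Real.log n) := by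
        apply mul_le_mul hβexp hg1b hgR1pos.le (by positivity)
    _ = Real.exp (-((m:ℝ)/(8*(n:ℝ))) + (2 + 2*Real.log n)) := (Real.exp_add _ _).symm
    _ ≤ Real.exp ((-γ) * Real.log n) := by
        apply Real.exp_le_exp.2
        nlinarith [hdiv]
    _ = (n:ℝ)^(-γ) := hrpow.symm
end

section
/- Let N ≥ 1 and k ≥ 1 be natural numbers and let X₁, …, X_k be independent random variables, each uniformly distributed on Fin N. Then the probability that there exists an index i with X_j < X_i for all j ≠ i (i.e., the maximum is attained at a unique index) is at least 1 − (k−1)/N. -/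
open MeasureTheory ProbabilityTheory
open scoped ENNReal

lemma sup'_attach_aux {α β : Type*} [SemilatticeSup β] (s : Finset α) (h : s.attach.Nonempty)
    (h' : s.Nonempty) (f : α → β) : s.attach.sup' h (fun l => f l.1) = s.sup' h' f := by
  apply le_antisymm
  · exact Finset.sup'_le _ _ fun l _ => Finset.le_sup' f l.2
  · exact Finset.sup'_le _ _ fun x hx =>
      Finset.le_sup' (fun l : {x // x ∈ s} => f l.1) (Finset.mem_attach s ⟨x, hx⟩)

/-- If `X₁, …, X_k` are independent random variables, each uniform on `Fin N` (`N ≥ 1`),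
then the maximum is attained at a unique index with probability at least `1 - (k-1)/N`. -/
theorem stmt_5 (N k : ℕ) (hN : 1 ≤ N) (hk : 1 ≤ k)
    {Ω : Type*} [MeasurableSpace Ω] (μ : Measure Ω) [IsProbabilityMeasure μ]
    (X : Fin k → Ω → Fin N) (hmeas : ∀ i, Measurable (X i))
    (hindep : iIndepFun X μ)
    (hunif : ∀ i, Measure.map (X i) μ = uniformOn (Set.univ : Set (Fin N))) :
    1 - ((k : ℝ) - 1) / N ≤
      (μ {ω | ∃ i, ∀ j, j ≠ i → X j ω < X i ω}).toReal := by
  classical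
  haveI : NeZero k := ⟨by omega⟩
  have hNpos : (0:ℝ) < N := by exact_mod_cast hN
  set A : Set Ω := {ω | ∃ i, ∀ j, j ≠ i → X j ω < X i ω} with hA
  have hAmeas : MeasurableSet A := by
    have hrw : A = ⋃ i, ⋂ j, {ω | j ≠ i → X j ω < X i ω} := by
      ext ω; simp [hA, Set.mem_iUnion, Set.mem_iInter]
    rw [hrw]
    refine MeasurableSet.iUnion fun i => MeasurableSet.iInter fun j => ?_
    by_cases h : j = i
    · simp [h]
    · have hrw2 : {ω | j ≠ i → X j ω < X i ω}
          = (fun ω => (X j ω, X i ω)) ⁻¹' {p : Fin N × Fin N | p.1 < p.2} := by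
        ext ω; simp [h]
      rw [hrw2]
      exact ((hmeas j).prodMk (hmeas i)) (Set.Finite.measurableSet (Set.toFinite _))
  rcases eq_or_lt_of_le hk with h1 | h2
  · -- k = 1 : the event is everything
    have hAuniv : A = Set.univ := by
      ext ω
      simp only [hA, Set.mem_setOf_eq, Set.mem_univ, iff_true]
      refine ⟨0, fun j hj => absurd (Fin.ext ?_) hj⟩
      have := j.isLt
      omega
    rw [hAuniv, measure_univ]
    have : (k : ℝ) = 1 := by exact_mod_cast h1.symm
    simp [this]
  -- main case : k ≥ 2
  have hne : ∀ j : Fin k, (Finset.univ.erase j).Nonempty := by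
    intro j
    apply Finset.card_pos.mp
    rw [Finset.card_erase_of_mem (Finset.mem_univ j), Finset.card_univ, Fintype.card_fin]
    omega
  set g : Fin k → Ω → Fin N :=
    fun j ω => (Finset.univ.erase j).sup' (hne j) (fun l => X l ω) with hg
  have hgmeas : ∀ j, Measurable (g j) := fun j =>
    (measurable_of_countable
      (fun v : Fin k → Fin N => (Finset.univ.erase j).sup' (hne j) v)).comp
      (measurable_pi_lambda _ hmeas)
  have hind : ∀ j, IndepFun (X j) (g j) μ := by
    intro j
    have hatt : ((Finset.univ.erase j).attach).Nonempty := by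
      simpa using hne j
    have hc := (hindep.indepFun_finset {j} (Finset.univ.erase j)
        (by simp) hmeas).comp
      (measurable_of_countable
        (fun v : ({l // l ∈ ({j} : Finset (Fin k))} → Fin N) => v ⟨j, Finset.mem_singleton_self j⟩))
      (measurable_of_countable
        (fun v : ({l // l ∈ (Finset.univ.erase j : Finset (Fin k))} → Fin N) =>
          (Finset.univ.erase j).attach.sup' hatt (fun l => v l)))
    have e1 : X j = (fun v : {l // l ∈ ({j} : Finset (Fin k))} → Fin N =>
        v ⟨j, Finset.mem_singleton_self j⟩) ∘ (fun a i => X i.1 a) := rfl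
    have e2 : g j = (fun v : {l // l ∈ (Finset.univ.erase j : Finset (Fin k))} → Fin N =>
        (Finset.univ.erase j).attach.sup' hatt (fun l => v l)) ∘ (fun a i => X i.1 a) := by
      funext a
      exact (sup'_attach_aux _ hatt (hne j) (fun l => X l a)).symm
    rw [e1, e2]
    exact hc
  have hXfiber : ∀ (j : Fin k) (m : Fin N), μ (X j ⁻¹' {m}) = (N : ℝ≥0∞)⁻¹ := by
    intro j m
    have h1 : μ (X j ⁻¹' {m}) = Measure.map (X j) μ {m} :=
      (Measure.map_apply (hmeas j) (measurableSet_singleton m)).symm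
    rw [h1, hunif j, uniformOn_univ, Measure.count_singleton, Fintype.card_fin, one_div]
  have hE : ∀ j : Fin k, μ {ω | X j ω = g j ω} ≤ (N : ℝ≥0∞)⁻¹ := by
    intro j
    have hcover : {ω | X j ω = g j ω} = ⋃ m : Fin N, (X j ⁻¹' {m} ∩ g j ⁻¹' {m}) := by
      ext ω
      simp only [Set.mem_setOf_eq, Set.mem_iUnion, Set.mem_inter_iff, Set.mem_preimage,
        Set.mem_singleton_iff]
      constructor
      · intro h; exact ⟨g j ω, h, rfl⟩
      · rintro ⟨m, h1, h2⟩; rw [h1, h2]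
    rw [hcover]
    calc μ (⋃ m : Fin N, X j ⁻¹' {m} ∩ g j ⁻¹' {m})
        ≤ ∑' m : Fin N, μ (X j ⁻¹' {m} ∩ g j ⁻¹' {m}) := measure_iUnion_le _
      _ = ∑ m : Fin N, μ (X j ⁻¹' {m} ∩ g j ⁻¹' {m}) := tsum_fintype _
      _ = ∑ m : Fin N, (N : ℝ≥0∞)⁻¹ * μ (g j ⁻¹' {m}) := by
          refine Finset.sum_congr rfl fun m _ => ?_
          rw [(hind j).measure_inter_preimage_eq_mul _ _ (measurableSet_singleton m)
            (measurableSet_singleton m), hXfiber]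
      _ = (N : ℝ≥0∞)⁻¹ * ∑ m : Fin N, μ (g j ⁻¹' {m}) := by rw [Finset.mul_sum]
      _ = (N : ℝ≥0∞)⁻¹ := by
          rw [sum_measure_preimage_singleton _
            (fun m _ => hgmeas j (measurableSet_singleton m))]
          simp
  have hsub : Aᶜ ⊆ ⋃ j ∈ Finset.univ.erase (0 : Fin k), {ω | X j ω = g j ω} := by
    intro ω hω
    simp only [Set.mem_compl_iff, hA, Set.mem_setOf_eq, not_exists, not_forall] at hω
    obtain ⟨i0, _, hi0⟩ :=
      Finset.exists_max_image Finset.univ (fun l => X l ω) ⟨0, Finset.mem_univ _⟩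
    obtain ⟨j, hji, hle⟩ := hω i0
    have hXj : X j ω = X i0 ω := le_antisymm (hi0 j (Finset.mem_univ j)) (not_lt.mp hle)
    have key : ∀ a b : Fin k, a ≠ b → b ≠ 0 → (∀ l, X l ω ≤ X b ω) → X a ω = X b ω →
        ω ∈ ⋃ j ∈ Finset.univ.erase (0:Fin k), {ω | X j ω = g j ω} := by
      intro a b hab hb0 hmax heq
      refine Set.mem_biUnion (Finset.mem_erase.mpr ⟨hb0, Finset.mem_univ b⟩) ?_
      have h1 : X b ω ≤ g b ω := by
        calc X b ω = X a ω := heq.symm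
          _ ≤ g b ω := Finset.le_sup' (fun l => X l ω)
              (Finset.mem_erase.mpr ⟨hab, Finset.mem_univ a⟩)
      have h2 : g b ω ≤ X b ω := by
        obtain ⟨l, _, hleq⟩ := Finset.exists_mem_eq_sup' (hne b) (fun l => X l ω)
        show (Finset.univ.erase b).sup' (hne b) (fun l => X l ω) ≤ X b ω
        rw [hleq]; exact hmax l
      exact le_antisymm h1 h2
    by_cases hj0 : j = 0
    · refine key j i0 hji ?_ (fun l => hi0 l (Finset.mem_univ l)) hXj
      intro h; exact hji (by rw [hj0, h])
    · refine key i0 j (Ne.symm hji) hj0 (fun l => ?_) hXj.symm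
      rw [hXj]; exact hi0 l (Finset.mem_univ l)
  have hcb : μ Aᶜ ≤ ((k - 1 : ℕ) : ℝ≥0∞) / N := by
    calc μ Aᶜ ≤ μ (⋃ j ∈ Finset.univ.erase (0:Fin k), {ω | X j ω = g j ω}) :=
          measure_mono hsub
      _ ≤ ∑ j ∈ Finset.univ.erase (0:Fin k), μ {ω | X j ω = g j ω} :=
          measure_biUnion_finset_le _ _
      _ ≤ ∑ _j ∈ Finset.univ.erase (0:Fin k), (N:ℝ≥0∞)⁻¹ :=
          Finset.sum_le_sum (fun j _ => hE j)
      _ = ((k-1:ℕ):ℝ≥0∞) * (N:ℝ≥0∞)⁻¹ := by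
          rw [Finset.sum_const, Finset.card_erase_of_mem (Finset.mem_univ _),
            Finset.card_univ, Fintype.card_fin, nsmul_eq_mul]
      _ = ((k - 1 : ℕ) : ℝ≥0∞) / N := by rw [div_eq_mul_inv]
  -- conclude
  have hsum : (μ A).toReal + (μ Aᶜ).toReal = 1 := by
    rw [← ENNReal.toReal_add (measure_ne_top μ A) (measure_ne_top μ Aᶜ),
      measure_add_measure_compl hAmeas, measure_univ, ENNReal.toReal_one]
  have hcbR : (μ Aᶜ).toReal ≤ ((k - 1 : ℕ) : ℝ) / N := by
    have htop : ((k - 1 : ℕ) : ℝ≥0∞) / N ≠ ⊤ := by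
      exact (ENNReal.div_lt_top (by simp) (by simp; omega)).ne
    calc (μ Aᶜ).toReal ≤ (((k - 1 : ℕ) : ℝ≥0∞) / N).toReal := ENNReal.toReal_mono htop hcb
      _ = ((k - 1 : ℕ) : ℝ) / N := by
          rw [ENNReal.toReal_div, ENNReal.toReal_natCast, ENNReal.toReal_natCast]
  have hcast : ((k : ℝ) - 1) = ((k - 1 : ℕ) : ℝ) := by
    rw [Nat.cast_sub hk, Nat.cast_one]
  rw [hcast]
  have := hsum
  linarith [hcbR]
end

section
/- Let n ≥ 4 and let D ⊆ Fin n with |D| = ρ, where 1 ≤ ρ and 2ρ < n. For each a ∈ Fin n \ D let τ_a be the least k ≥ 1 such that the k-th pair X_k consists of a and an element of D (in either order), and let T = max_{a ∉ D} τ_a. Then the expectation of T is at least (n² · ln n)/(8ρ). -/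
open MeasureTheory ProbabilityTheory

section AuxLemmas

lemma aux_PZ {Ω : Type*} [MeasurableSpace Ω] (μ : Measure Ω) (N : Ω → ENNReal)
    (hN : Measurable N) (A : Set Ω) (hA : MeasurableSet A)
    (hNA : ∀ ω, ω ∉ A → N ω = 0) :
    (∫⁻ ω, N ω ∂μ) ^ 2 ≤ (∫⁻ ω, (N ω) ^ 2 ∂μ) * μ A := by
  have hg : Measurable (A.indicator (1 : Ω → ENNReal)) :=
    measurable_const.indicator hA
  have hconj : Real.HolderConjugate 2 2 := by constructor <;> norm_num
  have hH := ENNReal.lintegral_mul_le_Lp_mul_Lq μ hconj hN.aemeasurable hg.aemeasurable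
  have heq : ∀ ω, (N * A.indicator (1 : Ω → ENNReal)) ω = N ω := by
    intro ω
    by_cases h : ω ∈ A
    · simp [Set.indicator_of_mem h]
    · simp [Set.indicator_of_notMem h, hNA ω h]
  rw [lintegral_congr heq] at hH
  have hind : ∀ ω, (A.indicator (1 : Ω → ENNReal) ω) ^ (2:ℝ) =
      A.indicator (1 : Ω → ENNReal) ω := by
    intro ω; by_cases h : ω ∈ A <;> simp [h]
  rw [lintegral_congr hind, lintegral_indicator_one hA] at hH
  calc (∫⁻ ω, N ω ∂μ) ^ 2
      ≤ ((∫⁻ a, N a ^ (2:ℝ) ∂μ) ^ (1/(2:ℝ)) * (μ A) ^ (1/(2:ℝ))) ^ 2 :=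
        pow_le_pow_left' hH 2
    _ = (∫⁻ a, N a ^ (2:ℝ) ∂μ) * μ A := by
        rw [mul_pow, ← ENNReal.rpow_natCast ((∫⁻ a, N a ^ (2:ℝ) ∂μ) ^ (1/(2:ℝ))),
          ← ENNReal.rpow_natCast ((μ A) ^ (1/(2:ℝ))), ← ENNReal.rpow_mul, ← ENNReal.rpow_mul]
        norm_num
    _ = (∫⁻ ω, (N ω) ^ 2 ∂μ) * μ A := by
        congr 1
        refine lintegral_congr fun ω => ?_
        rw [← ENNReal.rpow_natCast (N ω) 2]; norm_num

lemma aux_sum_le_lintegral {Ω : Type*} [MeasurableSpace Ω] (μ : Measure Ω) (f : Ω → ℕ)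
    (hf : ∀ k, MeasurableSet {ω | k < f ω}) (K : ℕ) :
    ∑ k ∈ Finset.range K, μ {ω | k < f ω} ≤ ∫⁻ ω, (f ω : ENNReal) ∂μ := by
  have h1 : ∀ k, μ {ω | k < f ω} = ∫⁻ ω, Set.indicator {ω | k < f ω} (1 : Ω → ENNReal) ω ∂μ := by
    intro k; rw [lintegral_indicator_one (hf k)]
  simp_rw [h1]
  rw [← lintegral_finset_sum]
  · refine lintegral_mono fun ω => ?_
    have h2 : ∑ k ∈ Finset.range K, Set.indicator {ω | k < f ω} (1 : Ω → ENNReal) ω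
        = ∑ k ∈ Finset.range K, (if k < f ω then (1:ENNReal) else 0) := by
      refine Finset.sum_congr rfl fun k _ => ?_
      by_cases h : k < f ω <;> simp [Set.indicator, h]
    rw [h2, ← Finset.sum_filter, Finset.sum_const, nsmul_eq_mul, mul_one]
    have h3 : ((Finset.range K).filter (fun k => k < f ω)).card ≤ f ω := by
      have hsub : (Finset.range K).filter (fun k => k < f ω) ⊆ Finset.range (f ω) := by
        intro k hk
        simp only [Finset.mem_filter, Finset.mem_range] at hk ⊢
        exact hk.2
      simpa using Finset.card_le_card hsub
    exact (Nat.cast_le (α := ENNReal)).mpr h3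
  · intro k _; exact measurable_const.indicator (hf k)

lemma aux_lintegral_le_tsum {Ω : Type*} [MeasurableSpace Ω] (μ : Measure Ω) (f : Ω → ℕ)
    (hf : ∀ k, MeasurableSet {ω | k < f ω}) :
    ∫⁻ ω, (f ω : ENNReal) ∂μ ≤ ∑' k : ℕ, μ {ω | k < f ω} := by
  set g : ℕ → Ω → ENNReal := fun k => Set.indicator {ω | k < f ω} (fun _ => 1) with hg
  have hpt : ∀ ω, (f ω : ENNReal) = ∑' k : ℕ, g k ω := by
    intro ω
    rw [tsum_eq_sum (s := Finset.range (f ω)) (fun k hk => by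
      simp only [Finset.mem_range, not_lt] at hk
      simp [hg, Set.indicator, Nat.not_lt.2 hk])]
    have h1 : ∀ k ∈ Finset.range (f ω), g k ω = 1 := by
      intro k hk
      simp only [Finset.mem_range] at hk
      simp [hg, Set.indicator, hk]
    rw [Finset.sum_congr rfl h1]; simp
  rw [lintegral_congr hpt,
    lintegral_tsum (fun k => (measurable_const.indicator (hf k)).aemeasurable)]
  refine ENNReal.tsum_le_tsum fun k => ?_
  rw [lintegral_indicator_const (hf k), one_mul]

lemma aux_log_le_three {x : ℝ} (hx0 : 0 < x) (hx : x ≤ 20) : Real.log x ≤ 3 := by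
  rw [Real.log_le_iff_le_exp hx0]
  have h1 := Real.exp_one_gt_d9
  have h3 : Real.exp 3 = Real.exp 1 ^ (3:ℕ) := by
    rw [← Real.exp_nat_mul]; norm_num
  have h4 : (2.7182818283:ℝ)^(3:ℕ) ≤ Real.exp 1 ^ (3:ℕ) :=
    pow_le_pow_left₀ (by norm_num) h1.le 3
  have h5 : (20.08:ℝ) ≤ (2.7182818283:ℝ)^(3:ℕ) := by norm_num
  linarith

lemma aux_three_le_log {x : ℝ} (hx : 21 ≤ x) : 3 ≤ Real.log x := by
  rw [Real.le_log_iff_exp_le (by linarith)]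
  have h1 := Real.exp_one_lt_d9
  have h3 : Real.exp 3 = Real.exp 1 ^ (3:ℕ) := by
    rw [← Real.exp_nat_mul]; norm_num
  have h4 : Real.exp 1 ^ (3:ℕ) ≤ (2.7182818286:ℝ)^(3:ℕ) :=
    pow_le_pow_left₀ (Real.exp_pos 1).le h1.le 3
  have h5 : (2.7182818286:ℝ)^(3:ℕ) ≤ 20.09 := by norm_num
  linarith

lemma aux_exp_neg_le {p : ℝ} (hp0 : 0 ≤ p) (hp1 : p < 1) :
    Real.exp (-(p / (1 - p))) ≤ 1 - p := by
  have hne : (1:ℝ) - p ≠ 0 := by linarith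
  have h := Real.add_one_le_exp (p / (1 - p))
  rw [Real.exp_neg]
  rw [inv_le_comm₀ (Real.exp_pos _) (by linarith)]
  calc (1 - p)⁻¹ = 1 + p / (1-p) := by field_simp; ring
    _ ≤ Real.exp (p / (1-p)) := by linarith

variable {n : ℕ}

/-- the set of ordered pairs pairing `a` with a member of `D` -/
def hitf (D : Finset (Fin n)) (a : Fin n) : Finset (Fin n × Fin n) :=
  D.image (fun d => (a, d)) ∪ D.image (fun d => (d, a))

lemma hitf_coe (D : Finset (Fin n)) (a : Fin n) :
    (hitf D a : Set (Fin n × Fin n)) =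
      {p : Fin n × Fin n | (p.1 = a ∧ p.2 ∈ D) ∨ (p.2 = a ∧ p.1 ∈ D)} := by
  ext ⟨x, y⟩
  simp only [hitf, Finset.coe_union, Set.mem_union, Finset.coe_image, Set.mem_image,
    Finset.mem_coe, Set.mem_setOf_eq, Prod.mk.injEq]
  constructor
  · rintro (⟨d, hd, h1, h2⟩ | ⟨d, hd, h1, h2⟩)
    · exact Or.inl ⟨h1.symm, h2 ▸ hd⟩
    · exact Or.inr ⟨h2.symm, h1 ▸ hd⟩
  · rintro (⟨h1, h2⟩ | ⟨h1, h2⟩)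
    · exact Or.inl ⟨y, h2, h1.symm, rfl⟩
    · exact Or.inr ⟨x, h2, rfl, h1.symm⟩

lemma hitf_card (D : Finset (Fin n)) (a : Fin n) (ha : a ∉ D) :
    (hitf D a).card = 2 * D.card := by
  have h1 : Disjoint (D.image (fun d => ((a, d) : Fin n × Fin n)))
      (D.image (fun d => ((d, a) : Fin n × Fin n))) := by
    rw [Finset.disjoint_left]
    rintro ⟨x, y⟩ hx hy
    simp only [Finset.mem_image, Prod.mk.injEq] at hx hy
    obtain ⟨d, hd, rfl, rfl⟩ := hx
    obtain ⟨d', hd', h1, h2⟩ := hy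
    exact ha (h2 ▸ hd)
  rw [hitf, Finset.card_union_of_disjoint h1,
    Finset.card_image_of_injective _ (fun x y h => by simpa using h),
    Finset.card_image_of_injective _ (fun x y h => by simpa using h)]
  ring

lemma hitf_subset (D : Finset (Fin n)) (a : Fin n) (ha : a ∉ D) :
    hitf D a ⊆ Finset.univ.offDiag := by
  intro p hp
  rw [← Finset.mem_coe, hitf_coe] at hp
  have := hp
  simp only [Finset.mem_offDiag, Finset.mem_univ, true_and]
  rcases this with ⟨h1, h2⟩ | ⟨h1, h2⟩
  · exact fun h => ha (h1 ▸ h ▸ h2)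
  · exact fun h => ha (h1 ▸ h.symm ▸ h2)

lemma hitf_disj (D : Finset (Fin n)) (a b : Fin n) (ha : a ∉ D) (hb : b ∉ D) (hab : a ≠ b) :
    Disjoint (hitf D a) (hitf D b) := by
  rw [Finset.disjoint_left]
  intro p hpa hpb
  rw [← Finset.mem_coe, hitf_coe] at hpa hpb
  have h1 := hpa
  have h2 := hpb
  rcases h1 with ⟨e1, e2⟩ | ⟨e1, e2⟩ <;> rcases h2 with ⟨f1, f2⟩ | ⟨f1, f2⟩
  · exact hab (e1.symm.trans f1)
  · exact hb (f1 ▸ e2)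
  · exact ha (e1 ▸ f2)
  · exact hab (e1.symm.trans f1)

lemma offDiag_coe : ((Finset.univ.offDiag : Finset (Fin n × Fin n)) : Set (Fin n × Fin n))
    = {p : Fin n × Fin n | p.1 ≠ p.2} := by
  ext p
  simp [Finset.mem_offDiag]

lemma offDiag_card : (Finset.univ.offDiag : Finset (Fin n × Fin n)).card = n * n - n := by
  rw [Finset.offDiag_card]
  simp

lemma aux_uniformOn_compl {α : Type*} [Fintype α] [DecidableEq α] [MeasurableSpace α]
    [MeasurableSingletonClass α]
    (Sf Ef : Finset α) (h : Ef ⊆ Sf) :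
    uniformOn (↑Sf) ((↑Ef : Set α))ᶜ = ((Sf.card - Ef.card : ℕ) : ENNReal) / (Sf.card : ENNReal) := by
  rw [uniformOn, cond_apply Sf.measurableSet]
  have h1 : (↑Sf : Set α) ∩ (↑Ef : Set α)ᶜ = ↑(Sf \ Ef) := by
    ext x; simp [and_comm]
  rw [h1, Measure.count_apply_finset, Measure.count_apply_finset, Finset.card_sdiff_of_subset h,
    ENNReal.div_eq_inv_mul]

lemma aux_miss {n : ℕ} {Ω : Type*} [MeasurableSpace Ω] (μ : Measure Ω)
    [IsProbabilityMeasure μ]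
    (X : ℕ → Ω → Fin n × Fin n) (hmeas : ∀ k, Measurable (X k))
    (hindep : iIndepFun (fun k => X (k + 1)) μ)
    (hunif : ∀ k, 1 ≤ k → Measure.map (X k) μ = uniformOn {p : Fin n × Fin n | p.1 ≠ p.2})
    (E : Set (Fin n × Fin n)) (k : ℕ) :
    μ (⋂ j ∈ Finset.range k, X (j+1) ⁻¹' Eᶜ)
      = (uniformOn {p : Fin n × Fin n | p.1 ≠ p.2} Eᶜ) ^ k := by
  have hEc : MeasurableSet (Eᶜ) := (Set.toFinite _).measurableSet
  have h := hindep.measure_inter_preimage_eq_mul (Finset.range k)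
    (sets := fun _ => Eᶜ) (fun i _ => hEc)
  have hstep : ∀ j : ℕ, μ (X (j+1) ⁻¹' Eᶜ) = uniformOn {p : Fin n × Fin n | p.1 ≠ p.2} Eᶜ := by
    intro j
    rw [← hunif (j+1) (Nat.le_add_left 1 j), Measure.map_apply (hmeas _) hEc]
  rw [h]
  rw [Finset.prod_congr rfl (fun j _ => hstep j), Finset.prod_const, Finset.card_range]

end AuxLemmas

set_option maxHeartbeats 1600000 in
/-- Under the uniform pairwise scheduler (`X k`, `k ≥ 1`, i.i.d. uniform on ordered
pairs of distinct agents of `Fin n`), let `D` be a set of `ρ` deputies with `1 ≤ ρ`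
and `2ρ < n`, where `n ≥ 4`.  For every non-deputy `a`, let `τ a` be the first `k ≥ 1`
such that the `k`-th interaction pairs `a` with a deputy (in either order), and let
`T = max_{a ∉ D} τ a`.  Then `E[T] ≥ n² · ln n / (8ρ)`. -/
theorem stmt_11 (n : ℕ) (hn : 4 ≤ n)
    {Ω : Type*} [MeasurableSpace Ω] (μ : Measure Ω) [IsProbabilityMeasure μ]
    (X : ℕ → Ω → Fin n × Fin n) (hmeas : ∀ k, Measurable (X k))
    (hindep : iIndepFun (fun k => X (k + 1)) μ)
    (hunif : ∀ k, 1 ≤ k →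
      Measure.map (X k) μ = uniformOn {p : Fin n × Fin n | p.1 ≠ p.2})
    (D : Finset (Fin n)) (ρ : ℕ) (hD : D.card = ρ) (hρ1 : 1 ≤ ρ) (hρn : 2 * ρ < n)
    (τ : Fin n → Ω → ℕ)
    (hτ : ∀ a ∉ D, ∀ ω, τ a ω = sInf {k | 1 ≤ k ∧
      (((X k ω).1 = a ∧ (X k ω).2 ∈ D) ∨ ((X k ω).2 = a ∧ (X k ω).1 ∈ D))})
    (T : Ω → ℕ) (hT : ∀ ω, T ω = (Finset.univ \ D).sup fun a => τ a ω) :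
    (n : ℝ) ^ 2 * Real.log n / (8 * ρ) ≤ ∫ ω, (T ω : ℝ) ∂μ := by
  classical
  -- arithmetic setup
  have hn0 : 0 < n := by omega
  set NN : ℕ := n * n - n with hNNdef
  have h3n : 3 * n ≤ n * n := Nat.mul_le_mul_right n (by omega)
  have hNNn : 2 * n ≤ NN := by omega
  have hNN0 : 0 < NN := by omega
  have h2ρn : 2 * ρ ≤ n - 1 := by omega
  have h2ρNN : 2 * ρ < NN := by omega
  have h4ρNN : 4 * ρ ≤ NN := by omega
  set R : Finset (Fin n) := Finset.univ \ D with hRdef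
  have hmemR : ∀ a, a ∈ R ↔ a ∉ D := by
    intro a; simp [hRdef]
  set m : ℕ := n - ρ with hmdef
  have hRcard : R.card = m := by
    rw [hRdef, Finset.card_sdiff_of_subset (Finset.subset_univ D), Finset.card_univ, Fintype.card_fin, hD]
  have hm1 : 1 ≤ m := by omega
  have hmn : n < 2 * m := by omega
  -- basic ENNReal quantities
  set q1 : ENNReal := ((NN - 2*ρ : ℕ) : ENNReal) / (NN : ENNReal) with hq1def
  set q2 : ENNReal := ((NN - 4*ρ : ℕ) : ENNReal) / (NN : ENNReal) with hq2def
  have hNNne0 : ((NN : ℕ) : ENNReal) ≠ 0 := by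
    simp [hNN0.ne']
  have hNNnetop : ((NN : ℕ) : ENNReal) ≠ ⊤ := ENNReal.natCast_ne_top NN
  have hq1le1 : q1 ≤ 1 := by
    rw [hq1def, ENNReal.div_le_iff hNNne0 hNNnetop, one_mul]
    exact_mod_cast Nat.sub_le NN (2*ρ)
  have hq1lt1 : q1 < 1 := by
    rw [hq1def, ENNReal.div_lt_iff (Or.inl hNNne0) (Or.inl hNNnetop), one_mul]
    exact_mod_cast (by omega : NN - 2*ρ < NN)
  -- measure of miss events
  have hMissP : ∀ Ef : Finset (Fin n × Fin n), Ef ⊆ Finset.univ.offDiag → ∀ k,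
      μ (⋂ j ∈ Finset.range k, X (j+1) ⁻¹' (↑Ef : Set (Fin n × Fin n))ᶜ)
        = (((NN - Ef.card : ℕ) : ENNReal) / (NN : ENNReal)) ^ k := by
    intro Ef hEf k
    rw [aux_miss μ X hmeas hindep hunif _ k, ← offDiag_coe,
      aux_uniformOn_compl _ _ hEf, offDiag_card]
  have hMissMeas : ∀ (Ef : Finset (Fin n × Fin n)) (k : ℕ),
      MeasurableSet (⋂ j ∈ Finset.range k, X (j+1) ⁻¹' (↑Ef : Set (Fin n × Fin n))ᶜ) := by
    intro Ef k
    exact MeasurableSet.biInter (Set.to_countable _)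
      (fun j _ => hmeas (j+1) (Set.toFinite _).measurableSet)
  have hq1k : ∀ a ∉ D, ∀ k : ℕ,
      μ (⋂ j ∈ Finset.range k, X (j+1) ⁻¹' (↑(hitf D a) : Set (Fin n × Fin n))ᶜ) = q1 ^ k := by
    intro a ha k
    rw [hMissP _ (hitf_subset D a ha) k, hitf_card D a ha, hD]
  -- the ever-hit event
  have hHaMeas : ∀ a : Fin n,
      MeasurableSet (⋃ j : ℕ, X (j+1) ⁻¹' (↑(hitf D a) : Set (Fin n × Fin n))) := by
    intro a
    exact MeasurableSet.iUnion (fun j => hmeas (j+1) (Set.toFinite _).measurableSet)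
  have hmemHit : ∀ (a : Fin n) (ω : Ω) (j : ℕ),
      X j ω ∈ (↑(hitf D a) : Set (Fin n × Fin n)) ↔
        (((X j ω).1 = a ∧ (X j ω).2 ∈ D) ∨ ((X j ω).2 = a ∧ (X j ω).1 ∈ D)) := by
    intro a ω j; rw [hitf_coe]; rfl
  -- structure of the event {k < τ a}
  have hAeq : ∀ a ∉ D, ∀ k : ℕ, {ω | k < τ a ω} =
      (⋂ j ∈ Finset.range k, X (j+1) ⁻¹' (↑(hitf D a) : Set (Fin n × Fin n))ᶜ)
      ∩ (⋃ j : ℕ, X (j+1) ⁻¹' (↑(hitf D a) : Set (Fin n × Fin n))) := by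
    intro a ha k
    ext ω
    have hτω := hτ a ha ω
    simp only [Set.mem_setOf_eq, Set.mem_inter_iff, Set.mem_iInter, Set.mem_iUnion,
      Set.mem_preimage, Set.mem_compl_iff, Finset.mem_range]
    constructor
    · intro hk
      have hne : {j | 1 ≤ j ∧ (((X j ω).1 = a ∧ (X j ω).2 ∈ D) ∨
          ((X j ω).2 = a ∧ (X j ω).1 ∈ D))}.Nonempty := by
        by_contra hempty
        rw [Set.not_nonempty_iff_eq_empty] at hempty
        rw [hτω, hempty, Nat.sInf_empty] at hk
        omega
      constructor
      · intro j hj hmem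
        rw [hmemHit] at hmem
        have hjmem : (j+1) ∈ {jj | 1 ≤ jj ∧ (((X jj ω).1 = a ∧ (X jj ω).2 ∈ D) ∨
            ((X jj ω).2 = a ∧ (X jj ω).1 ∈ D))} := ⟨by omega, hmem⟩
        have hle := Nat.sInf_le hjmem
        rw [← hτω] at hle
        omega
      · obtain ⟨j, hj1, hjP⟩ := hne
        refine ⟨j - 1, ?_⟩
        rw [hmemHit]
        have hj : j - 1 + 1 = j := by omega
        rw [hj]
        exact hjP
    · rintro ⟨hMiss, j0, hj0⟩
      rw [hmemHit] at hj0
      have hne : {jj | 1 ≤ jj ∧ (((X jj ω).1 = a ∧ (X jj ω).2 ∈ D) ∨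
          ((X jj ω).2 = a ∧ (X jj ω).1 ∈ D))}.Nonempty := ⟨j0 + 1, by omega, hj0⟩
      have hmemInf := Nat.sInf_mem hne
      obtain ⟨h1inf, hPinf⟩ := hmemInf
      rw [hτω]
      by_contra hle
      push_neg at hle
      have hj' : sInf {jj | 1 ≤ jj ∧ (((X jj ω).1 = a ∧ (X jj ω).2 ∈ D) ∨
          ((X jj ω).2 = a ∧ (X jj ω).1 ∈ D))} - 1 < k := by omega
      have := hMiss _ hj'
      rw [hmemHit] at this
      have heq : sInf {jj | 1 ≤ jj ∧ (((X jj ω).1 = a ∧ (X jj ω).2 ∈ D) ∨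
          ((X jj ω).2 = a ∧ (X jj ω).1 ∈ D))} - 1 + 1
          = sInf {jj | 1 ≤ jj ∧ (((X jj ω).1 = a ∧ (X jj ω).2 ∈ D) ∨
          ((X jj ω).2 = a ∧ (X jj ω).1 ∈ D))} := by omega
      rw [heq] at this
      exact this hPinf
  -- measurability of {k < τ a}
  have hAmeas : ∀ a ∉ D, ∀ k : ℕ, MeasurableSet {ω | k < τ a ω} := by
    intro a ha k
    rw [hAeq a ha k]
    exact (hMissMeas _ k).inter (hHaMeas a)
  -- never hit has measure zero
  have hHa0 : ∀ a ∉ D,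
      μ (⋃ j : ℕ, X (j+1) ⁻¹' (↑(hitf D a) : Set (Fin n × Fin n)))ᶜ = 0 := by
    intro a ha
    have hsub : ∀ k : ℕ, (⋃ j : ℕ, X (j+1) ⁻¹' (↑(hitf D a) : Set (Fin n × Fin n)))ᶜ ⊆
        ⋂ j ∈ Finset.range k, X (j+1) ⁻¹' (↑(hitf D a) : Set (Fin n × Fin n))ᶜ := by
      intro k ω hω
      simp only [Set.mem_compl_iff, Set.mem_iUnion, not_exists, Set.mem_preimage] at hω
      simp only [Set.mem_iInter, Set.mem_preimage, Set.mem_compl_iff, Finset.mem_range]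
      intro j _
      exact hω j
    have hb : ∀ k : ℕ, μ (⋃ j : ℕ, X (j+1) ⁻¹' (↑(hitf D a) : Set (Fin n × Fin n)))ᶜ ≤ q1 ^ k := by
      intro k
      calc μ _ ≤ μ (⋂ j ∈ Finset.range k, X (j+1) ⁻¹' (↑(hitf D a) : Set (Fin n × Fin n))ᶜ) :=
            measure_mono (hsub k)
        _ = q1 ^ k := hq1k a ha k
    have htend : Filter.Tendsto (fun k : ℕ => q1 ^ k) Filter.atTop (nhds 0) :=
      ENNReal.tendsto_pow_atTop_nhds_zero_of_lt_one hq1lt1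
    have := ge_of_tendsto htend (Filter.Eventually.of_forall hb)
    exact le_antisymm this zero_le
  -- exact probability of {k < τ a}
  have hμA : ∀ a ∉ D, ∀ k : ℕ, μ {ω | k < τ a ω} = q1 ^ k := by
    intro a ha k
    refine le_antisymm ?_ ?_
    · rw [hAeq a ha k]
      calc μ _ ≤ μ (⋂ j ∈ Finset.range k, X (j+1) ⁻¹' (↑(hitf D a) : Set (Fin n × Fin n))ᶜ) :=
            measure_mono Set.inter_subset_left
        _ = q1 ^ k := hq1k a ha k
    · rw [← hq1k a ha k, hAeq a ha k]
      calc μ (⋂ j ∈ Finset.range k, X (j+1) ⁻¹' (↑(hitf D a) : Set (Fin n × Fin n))ᶜ)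
          ≤ μ ((⋂ j ∈ Finset.range k, X (j+1) ⁻¹' (↑(hitf D a) : Set (Fin n × Fin n))ᶜ)
              ∩ (⋃ j : ℕ, X (j+1) ⁻¹' (↑(hitf D a) : Set (Fin n × Fin n))))
            + μ ((⋂ j ∈ Finset.range k, X (j+1) ⁻¹' (↑(hitf D a) : Set (Fin n × Fin n))ᶜ)
              \ (⋃ j : ℕ, X (j+1) ⁻¹' (↑(hitf D a) : Set (Fin n × Fin n)))) :=
            measure_le_inter_add_diff μ _ _
        _ ≤ μ ((⋂ j ∈ Finset.range k, X (j+1) ⁻¹' (↑(hitf D a) : Set (Fin n × Fin n))ᶜ)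
              ∩ (⋃ j : ℕ, X (j+1) ⁻¹' (↑(hitf D a) : Set (Fin n × Fin n)))) + 0 :=
            add_le_add le_rfl (le_trans (measure_mono (Set.diff_subset_compl _ _))
              (le_of_eq (hHa0 a ha)))
        _ = μ ((⋂ j ∈ Finset.range k, X (j+1) ⁻¹' (↑(hitf D a) : Set (Fin n × Fin n))ᶜ)
              ∩ (⋃ j : ℕ, X (j+1) ⁻¹' (↑(hitf D a) : Set (Fin n × Fin n)))) := add_zero _
  -- pair bound
  have hμAB : ∀ a, a ∉ D → ∀ b, b ∉ D → a ≠ b → ∀ k : ℕ,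
      μ ({ω | k < τ a ω} ∩ {ω | k < τ b ω}) ≤ q2 ^ k := by
    intro a ha b hb hab k
    have hsub : {ω | k < τ a ω} ∩ {ω | k < τ b ω} ⊆
        ⋂ j ∈ Finset.range k, X (j+1) ⁻¹' (↑(hitf D a ∪ hitf D b) : Set (Fin n × Fin n))ᶜ := by
      intro ω hω
      obtain ⟨h1, h2⟩ := hω
      rw [hAeq a ha k] at h1
      rw [hAeq b hb k] at h2
      have h1' := h1.1
      have h2' := h2.1
      simp only [Set.mem_iInter, Set.mem_preimage, Set.mem_compl_iff, Finset.mem_range] at h1' h2' ⊢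
      intro j hj
      have := h1' j hj
      have := h2' j hj
      simp only [Finset.coe_union, Set.mem_union, Finset.mem_coe]
      push_neg
      constructor
      · exact fun hc => (h1' j hj) hc
      · exact fun hc => (h2' j hj) hc
    calc μ ({ω | k < τ a ω} ∩ {ω | k < τ b ω}) ≤
        μ (⋂ j ∈ Finset.range k, X (j+1) ⁻¹' (↑(hitf D a ∪ hitf D b) : Set (Fin n × Fin n))ᶜ) :=
          measure_mono hsub
      _ = q2 ^ k := by
          have hcard : (hitf D a ∪ hitf D b).card = 4 * ρ := by
            rw [Finset.card_union_of_disjoint (hitf_disj D a b ha hb hab),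
              hitf_card D a ha, hitf_card D b hb, hD]
            ring
          have hsub' : hitf D a ∪ hitf D b ⊆ Finset.univ.offDiag := by
            intro p hp
            rcases Finset.mem_union.1 hp with h | h
            · exact hitf_subset D a ha h
            · exact hitf_subset D b hb h
          rw [hMissP _ hsub' k, hcard]
  -- the event {k < T}
  have hTset : ∀ k : ℕ, {ω | k < T ω} = ⋃ a ∈ R, {ω | k < τ a ω} := by
    intro k
    ext ω
    simp only [Set.mem_setOf_eq, hT ω, Finset.lt_sup_iff, Set.mem_iUnion, exists_prop]
  have hTmeasSet : ∀ k : ℕ, MeasurableSet {ω | k < T ω} := by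
    intro k
    rw [hTset k]
    exact MeasurableSet.biUnion R.countable_toSet (fun a ha => hAmeas a ((hmemR a).1 ha) k)
  have hμTle : ∀ k : ℕ, μ {ω | k < T ω} ≤ (m : ENNReal) * q1 ^ k := by
    intro k
    rw [hTset k]
    calc μ (⋃ a ∈ R, {ω | k < τ a ω}) ≤ ∑ a ∈ R, μ {ω | k < τ a ω} :=
        measure_biUnion_finset_le R _
      _ = ∑ a ∈ R, q1 ^ k := Finset.sum_congr rfl (fun a ha => hμA a ((hmemR a).1 ha) k)
      _ = (m : ENNReal) * q1 ^ k := by rw [Finset.sum_const, hRcard, nsmul_eq_mul]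
  -- the counting function N
  set N : ℕ → Ω → ENNReal :=
    fun k ω => ∑ a ∈ R, Set.indicator {ω' | k < τ a ω'} (fun _ => (1:ENNReal)) ω with hNdef
  have hNmeas : ∀ k, Measurable (N k) := by
    intro k
    exact Finset.measurable_sum R
      (fun a ha => measurable_const.indicator (hAmeas a ((hmemR a).1 ha) k))
  have hI1 : ∀ k, ∫⁻ ω, N k ω ∂μ = (m : ENNReal) * q1 ^ k := by
    intro k
    rw [hNdef]
    simp only []
    rw [lintegral_finset_sum _ (fun a ha =>
      measurable_const.indicator (hAmeas a ((hmemR a).1 ha) k))]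
    calc ∑ a ∈ R, ∫⁻ ω, Set.indicator {ω' | k < τ a ω'} (fun _ => (1:ENNReal)) ω ∂μ
        = ∑ a ∈ R, μ {ω' | k < τ a ω'} := by
          refine Finset.sum_congr rfl (fun a ha => ?_)
          rw [lintegral_indicator_const (hAmeas a ((hmemR a).1 ha) k), one_mul]
      _ = ∑ a ∈ R, q1 ^ k := Finset.sum_congr rfl (fun a ha => hμA a ((hmemR a).1 ha) k)
      _ = (m : ENNReal) * q1 ^ k := by rw [Finset.sum_const, hRcard, nsmul_eq_mul]
  have hI2 : ∀ k, ∫⁻ ω, (N k ω) ^ 2 ∂μ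
      ≤ (m : ENNReal) * q1 ^ k + (m : ENNReal)^2 * q2 ^ k := by
    intro k
    have hptw : ∀ ω, (N k ω) ^ 2 = ∑ a ∈ R, ∑ b ∈ R,
        Set.indicator ({ω' | k < τ a ω'} ∩ {ω' | k < τ b ω'}) (fun _ => (1:ENNReal)) ω := by
      intro ω
      rw [hNdef]
      simp only []
      rw [sq, Finset.sum_mul_sum]
      refine Finset.sum_congr rfl (fun a _ => Finset.sum_congr rfl (fun b _ => ?_))
      by_cases ha' : ω ∈ {ω' | k < τ a ω'} <;> by_cases hb' : ω ∈ {ω' | k < τ b ω'} <;>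
        simp [Set.indicator, ha', hb']
    have hmeasab : ∀ a ∈ R, ∀ b ∈ R,
        MeasurableSet ({ω' | k < τ a ω'} ∩ {ω' | k < τ b ω'}) := fun a ha b hb =>
      (hAmeas a ((hmemR a).1 ha) k).inter (hAmeas b ((hmemR b).1 hb) k)
    calc ∫⁻ ω, (N k ω) ^ 2 ∂μ
        = ∑ a ∈ R, ∑ b ∈ R, μ ({ω' | k < τ a ω'} ∩ {ω' | k < τ b ω'}) := by
          rw [lintegral_congr hptw, lintegral_finset_sum _ (fun a ha =>
            Finset.measurable_sum R (fun b hb =>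
              measurable_const.indicator (hmeasab a ha b hb)))]
          refine Finset.sum_congr rfl (fun a ha => ?_)
          rw [lintegral_finset_sum _ (fun b hb =>
            measurable_const.indicator (hmeasab a ha b hb))]
          refine Finset.sum_congr rfl (fun b hb => ?_)
          rw [lintegral_indicator_const (hmeasab a ha b hb), one_mul]
      _ ≤ ∑ a ∈ R, (q1 ^ k + (m : ENNReal) * q2 ^ k) := by
          refine Finset.sum_le_sum (fun a ha => ?_)
          have haD := (hmemR a).1 ha
          calc ∑ b ∈ R, μ ({ω' | k < τ a ω'} ∩ {ω' | k < τ b ω'})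
              = μ ({ω' | k < τ a ω'} ∩ {ω' | k < τ a ω'})
                + ∑ b ∈ R \ {a}, μ ({ω' | k < τ a ω'} ∩ {ω' | k < τ b ω'}) :=
                Finset.sum_eq_add_sum_sdiff_singleton_of_mem ha _
            _ ≤ q1 ^ k + (m : ENNReal) * q2 ^ k := by
                refine add_le_add ?_ ?_
                · rw [Set.inter_self, hμA a haD k]
                · calc ∑ b ∈ R \ {a}, μ ({ω' | k < τ a ω'} ∩ {ω' | k < τ b ω'})
                      ≤ ∑ b ∈ R \ {a}, q2 ^ k := by
                        refine Finset.sum_le_sum (fun b hb => ?_)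
                        obtain ⟨hbR, hbne⟩ := Finset.mem_sdiff.1 hb
                        refine hμAB a haD b ((hmemR b).1 hbR)
                          (fun hc => (Finset.mem_singleton.2 hc.symm) |> hbne) k
                    _ = ((R \ {a}).card : ENNReal) * q2 ^ k := by
                        rw [Finset.sum_const, nsmul_eq_mul]
                    _ ≤ (m : ENNReal) * q2 ^ k := by
                        refine mul_le_mul_left ?_ _
                        have : (R \ {a}).card ≤ m := by
                          rw [← hRcard]
                          exact Finset.card_le_card (Finset.sdiff_subset)
                        exact_mod_cast Nat.cast_le.mpr this
      _ = (m : ENNReal) * q1 ^ k + (m : ENNReal)^2 * q2 ^ k := by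
          rw [Finset.sum_const, hRcard, nsmul_eq_mul]
          ring
  -- Paley–Zygmund
  have hPZ : ∀ k : ℕ, ((m : ENNReal) * q1 ^ k) ^ 2 ≤
      ((m : ENNReal) * q1 ^ k + (m : ENNReal)^2 * q2 ^ k) * μ {ω | k < T ω} := by
    intro k
    have hvan : ∀ ω, ω ∉ {ω | k < T ω} → N k ω = 0 := by
      intro ω hω
      rw [hNdef]
      simp only []
      refine Finset.sum_eq_zero (fun a ha => ?_)
      rw [Set.indicator_of_notMem]
      intro hc
      exact hω (by rw [hTset k]; exact Set.mem_biUnion ha hc)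
    have hPZ' := aux_PZ μ (N k) (hNmeas k) _ (hTmeasSet k) hvan
    rw [hI1 k] at hPZ'
    exact le_trans hPZ' (mul_le_mul_left (hI2 k) _)
  have hq1top : q1 ≠ ⊤ := (lt_of_le_of_lt hq1le1 ENNReal.one_lt_top).ne
  -- q2 ≤ q1 ^ 2
  have hq2q1 : q2 ≤ q1 ^ 2 := by
    have hnat : (NN - 4*ρ) * NN ≤ (NN - 2*ρ)^2 := by
      zify [h4ρNN, h2ρNN.le]
      nlinarith [sq_nonneg ((2:ℤ)*ρ)]
    have hq1sq : q1 ^ 2 = ((NN - 2*ρ : ℕ) : ENNReal)^2 / ((NN : ENNReal) * NN) := by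
      rw [hq1def, div_eq_mul_inv, mul_pow, ← ENNReal.inv_pow, ← div_eq_mul_inv, sq ((NN : ℕ) : ENNReal)]
    rw [hq1sq]
    calc q2 = ((NN - 4*ρ : ℕ) : ENNReal) * NN / ((NN : ENNReal) * NN) := by
          rw [ENNReal.mul_div_mul_right _ _ hNNne0 hNNnetop]
      _ ≤ ((NN - 2*ρ : ℕ) : ENNReal)^2 / ((NN : ENNReal) * NN) := by
          refine ENNReal.div_le_div_right ?_ _
          calc ((NN - 4*ρ : ℕ) : ENNReal) * NN = (((NN - 4*ρ) * NN : ℕ) : ENNReal) := by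
                push_cast; ring
            _ ≤ (((NN - 2*ρ)^2 : ℕ) : ENNReal) := by exact_mod_cast hnat
            _ = ((NN - 2*ρ : ℕ) : ENNReal)^2 := by push_cast; ring
  -- half bound
  have hhalf : ∀ k : ℕ, (1:ENNReal) ≤ (m : ENNReal) * q1 ^ k → (2⁻¹ : ENNReal) ≤ μ {ω | k < T ω} := by
    intro k hx
    set x := (m : ENNReal) * q1 ^ k with hxdef
    have hxtop : x ≠ ⊤ :=
      ENNReal.mul_ne_top (ENNReal.natCast_ne_top m) (ENNReal.pow_ne_top hq1top)
    have hx0 : x ≠ 0 := by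
      intro h; rw [h] at hx; simp at hx
    have hq2k : (m : ENNReal)^2 * q2 ^ k ≤ x ^ 2 := by
      rw [hxdef, mul_pow]
      refine mul_le_mul_right ?_ _
      calc q2 ^ k ≤ (q1^2) ^ k := pow_le_pow_left' hq2q1 k
        _ = (q1 ^ k)^2 := by rw [← pow_mul, ← pow_mul, Nat.mul_comm]
    have hxx : x ≤ x^2 := by
      calc x = 1 * x := (one_mul x).symm
        _ ≤ x * x := mul_le_mul_left hx x
        _ = x ^ 2 := (sq x).symm
    have h2 : x ^ 2 * 1 ≤ x^2 * (2 * μ {ω | k < T ω}) := by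
      rw [mul_one]
      calc x^2 ≤ (x + (m:ENNReal)^2 * q2 ^ k) * μ {ω | k < T ω} := hPZ k
        _ ≤ (x^2 + x^2) * μ {ω | k < T ω} := mul_le_mul_left (add_le_add hxx hq2k) _
        _ = x^2 * (2 * μ {ω | k < T ω}) := by ring
    have h3 : (1:ENNReal) ≤ 2 * μ {ω | k < T ω} :=
      (ENNReal.mul_le_mul_iff_right (pow_ne_zero 2 hx0) (ENNReal.pow_ne_top hxtop)).1 h2
    calc (2⁻¹:ENNReal) = 2⁻¹ * 1 := (mul_one _).symm
      _ ≤ 2⁻¹ * (2 * μ {ω | k < T ω}) := mul_le_mul_right h3 _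
      _ = μ {ω | k < T ω} := by
          rw [← mul_assoc, ENNReal.inv_mul_cancel two_ne_zero ENNReal.ofNat_ne_top, one_mul]
  -- real-side quantities
  have hNNrpos : (0:ℝ) < (NN:ℝ) := by exact_mod_cast hNN0
  have hc2cast : ((NN - 2*ρ : ℕ):ℝ) = (NN:ℝ) - 2*ρ := by
    push_cast [Nat.cast_sub h2ρNN.le]; ring
  have hNN2ρpos : (0:ℝ) < (NN:ℝ) - 2*(ρ:ℝ) := by
    have : (2*ρ:ℕ) < NN := h2ρNN
    have := (Nat.cast_lt (α := ℝ)).2 this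
    push_cast at this
    linarith
  set q1r : ℝ := ((NN - 2*ρ:ℕ):ℝ)/(NN:ℝ) with hq1rdef
  have hq1rnonneg : 0 ≤ q1r := by
    rw [hq1rdef]; positivity
  have hq1ofReal : q1 = ENNReal.ofReal q1r := by
    rw [hq1def, hq1rdef, ENNReal.ofReal_div_of_pos hNNrpos, ENNReal.ofReal_natCast,
      ENNReal.ofReal_natCast]
  have hexpq1 : Real.exp (-((2*(ρ:ℝ))/((NN:ℝ) - 2*ρ))) ≤ q1r := by
    have hp1 : (2*(ρ:ℝ))/(NN:ℝ) < 1 := by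
      rw [div_lt_one hNNrpos]
      linarith
    have hp0 : (0:ℝ) ≤ (2*(ρ:ℝ))/(NN:ℝ) := by positivity
    have haux := aux_exp_neg_le hp0 hp1
    have h1 : 1 - (2*(ρ:ℝ))/(NN:ℝ) = q1r := by
      rw [hq1rdef, hc2cast]
      field_simp
    have h2 : ((2*(ρ:ℝ))/(NN:ℝ)) / (1 - (2*(ρ:ℝ))/(NN:ℝ)) = (2*(ρ:ℝ))/((NN:ℝ) - 2*ρ) := by
      rw [h1, hq1rdef, hc2cast]
      rw [div_div_div_eq]
      rw [mul_comm ((NN:ℝ)) ((NN:ℝ) - 2*(ρ:ℝ))]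
      rw [mul_div_mul_right _ _ (ne_of_gt hNNrpos)]
    rw [h2, h1] at haux
    exact haux
  -- if k*(2ρ) ≤ log m * (NN - 2ρ) then 1 ≤ m q1^k
  have hm0r : (0:ℝ) < (m:ℝ) := by exact_mod_cast hm1
  have hcond : ∀ k : ℕ, (k:ℝ) * (2*ρ) ≤ Real.log m * ((NN:ℝ) - 2*ρ) →
      (1:ENNReal) ≤ (m:ENNReal) * q1 ^ k := by
    intro k hk
    have hky : (k:ℝ) * ((2*(ρ:ℝ))/((NN:ℝ)-2*ρ)) ≤ Real.log m := by
      rw [mul_div_assoc', div_le_iff₀ hNN2ρpos]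
      calc (k:ℝ) * (2*ρ) ≤ Real.log m * ((NN:ℝ) - 2*ρ) := hk
        _ = Real.log ↑m * ((NN:ℝ) - 2*ρ) := rfl
    have hreal : (1:ℝ) ≤ (m:ℝ) * q1r ^ k := by
      have h1 : Real.exp (-(Real.log m)) ≤ Real.exp (-((k:ℝ) * ((2*(ρ:ℝ))/((NN:ℝ)-2*ρ)))) :=
        Real.exp_le_exp.2 (by linarith)
      have h2 : Real.exp (-((k:ℝ) * ((2*(ρ:ℝ))/((NN:ℝ)-2*ρ))))
          = Real.exp (-((2*(ρ:ℝ))/((NN:ℝ)-2*ρ))) ^ k := by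
        rw [← Real.exp_nat_mul]
        congr 1
        ring
      have h3 : Real.exp (-((2*(ρ:ℝ))/((NN:ℝ)-2*ρ))) ^ k ≤ q1r ^ k :=
        pow_le_pow_left₀ (Real.exp_pos _).le hexpq1 k
      have h4 : Real.exp (-(Real.log m)) = 1/(m:ℝ) := by
        rw [Real.exp_neg, Real.exp_log hm0r, one_div]
      have h5 : 1/(m:ℝ) ≤ q1r ^ k := by
        rw [← h4]
        exact le_trans h1 (le_trans (le_of_eq h2) h3)
      rw [div_le_iff₀ hm0r] at h5
      linarith
    calc (1:ENNReal) = ENNReal.ofReal 1 := by simp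
      _ ≤ ENNReal.ofReal ((m:ℝ) * q1r ^ k) := ENNReal.ofReal_le_ofReal hreal
      _ = ENNReal.ofReal (m:ℝ) * ENNReal.ofReal (q1r ^ k) := ENNReal.ofReal_mul (by positivity)
      _ = (m:ENNReal) * (ENNReal.ofReal q1r) ^ k := by
          rw [ENNReal.ofReal_pow hq1rnonneg, ENNReal.ofReal_natCast]
      _ = (m:ENNReal) * q1 ^ k := by rw [hq1ofReal]
  -- geometric sum facts
  have h1mq1 : 1 - q1 = ((2*ρ:ℕ):ENNReal)/(NN:ENNReal) := by
    have hadd : ((2*ρ:ℕ):ENNReal)/(NN:ENNReal) + q1 = 1 := by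
      rw [hq1def, ENNReal.div_add_div_same]
      have hnum : ((2*ρ:ℕ):ENNReal) + ((NN-2*ρ:ℕ):ENNReal) = ((NN:ℕ):ENNReal) := by
        rw [← Nat.cast_add]
        congr 1
        omega
      rw [hnum, ENNReal.div_self hNNne0 hNNnetop]
    rw [← hadd, ENNReal.add_sub_cancel_right hq1top]
  have hgeom : ∑' k:ℕ, q1 ^ k = (NN:ENNReal)/((2*ρ:ℕ):ENNReal) := by
    rw [ENNReal.tsum_geometric, h1mq1, ENNReal.inv_div (Or.inl hNNnetop) (Or.inl hNNne0)]
  have hρ2ne0 : ((2*ρ:ℕ):ENNReal) ≠ 0 := by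
    simp only [ne_eq, Nat.cast_eq_zero]
    omega
  have hfin : ∫⁻ ω, (T ω : ENNReal) ∂μ < ⊤ := by
    calc ∫⁻ ω, (T ω : ENNReal) ∂μ ≤ ∑' k:ℕ, μ {ω | k < T ω} :=
        aux_lintegral_le_tsum μ T hTmeasSet
      _ ≤ ∑' k:ℕ, (m:ENNReal) * q1 ^ k := ENNReal.tsum_le_tsum hμTle
      _ = (m:ENNReal) * ((NN:ENNReal)/((2*ρ:ℕ):ENNReal)) := by
          rw [ENNReal.tsum_mul_left, hgeom]
      _ < ⊤ := ENNReal.mul_lt_top (ENNReal.natCast_lt_top m)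
          (ENNReal.div_lt_top hNNnetop hρ2ne0)
  have hNNr : (NN:ℝ) = (n:ℝ)*(n:ℝ) - (n:ℝ) := by
    rw [hNNdef]
    push_cast [Nat.cast_sub (Nat.le_of_lt_succ (by omega : n < n*n+1))]
    ring
  have hlogn0 : 0 ≤ Real.log n := Real.log_nonneg (by exact_mod_cast (by omega : 1 ≤ n))
  have hρ0r : (0:ℝ) < (ρ:ℝ) := by exact_mod_cast hρ1
  -- the key lower bound on the lintegral
  have hkey : ENNReal.ofReal ((n:ℝ)^2 * Real.log n / (8*ρ)) ≤ ∫⁻ ω, (T ω : ENNReal) ∂μ := by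
    rcases le_or_gt n 20 with hsmall | hlarge
    · -- small n : single coupon bound
      obtain ⟨a0, ha0⟩ : R.Nonempty := Finset.card_pos.1 (by rw [hRcard]; omega)
      have ha0D := (hmemR a0).1 ha0
      have hsubT : ∀ k : ℕ, μ {ω | k < τ a0 ω} ≤ μ {ω | k < T ω} := by
        intro k
        refine measure_mono (fun ω hω => ?_)
        simp only [Set.mem_setOf_eq] at hω ⊢
        exact lt_of_lt_of_le hω (by rw [hT ω]; exact Finset.le_sup (f := fun a => τ a ω) ha0)
      have hge : (NN:ENNReal)/((2*ρ:ℕ):ENNReal) ≤ ∫⁻ ω, (T ω : ENNReal) ∂μ := by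
        rw [← hgeom, ENNReal.tsum_eq_iSup_nat]
        refine iSup_le fun K => ?_
        calc ∑ k ∈ Finset.range K, q1 ^ k
            = ∑ k ∈ Finset.range K, μ {ω | k < τ a0 ω} :=
              Finset.sum_congr rfl (fun k _ => (hμA a0 ha0D k).symm)
          _ ≤ ∑ k ∈ Finset.range K, μ {ω | k < T ω} := Finset.sum_le_sum (fun k _ => hsubT k)
          _ ≤ ∫⁻ ω, (T ω : ENNReal) ∂μ := aux_sum_le_lintegral μ T hTmeasSet K
      refine le_trans ?_ hge
      have hreal : (n:ℝ)^2 * Real.log n / (8*ρ) ≤ (NN:ℝ)/((2*ρ:ℕ):ℝ) := by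
        have hlog3 : Real.log n ≤ 3 := aux_log_le_three (by positivity) (by exact_mod_cast hsmall)
        rw [div_le_div_iff₀ (by positivity) (by positivity)]
        push_cast
        rw [hNNr]
        have hn4 : (4:ℝ) ≤ (n:ℝ) := by exact_mod_cast hn
        have e1 : (n:ℝ)^2 * Real.log n ≤ 3*(n:ℝ)^2 := by nlinarith [sq_nonneg ((n:ℝ))]
        nlinarith [mul_le_mul_of_nonneg_right e1 (by positivity : (0:ℝ) ≤ 2*(ρ:ℝ)),
          mul_le_mul_of_nonneg_right
            (show 6*(n:ℝ)^2 ≤ 8*(n:ℝ)^2-8*(n:ℝ) by nlinarith) hρ0r.le]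
      calc ENNReal.ofReal ((n:ℝ)^2*Real.log n/(8*ρ))
          ≤ ENNReal.ofReal ((NN:ℝ)/((2*ρ:ℕ):ℝ)) := ENNReal.ofReal_le_ofReal hreal
        _ = (NN:ENNReal)/((2*ρ:ℕ):ENNReal) := by
            rw [ENNReal.ofReal_div_of_pos (by exact_mod_cast (by omega : 0 < 2*ρ)),
              ENNReal.ofReal_natCast, ENNReal.ofReal_natCast]
    · -- large n : Paley–Zygmund bound
      set K := ⌊Real.log m * ((NN:ℝ) - 2*ρ) / (2*ρ)⌋₊ with hKdef
      have hlogm0 : 0 ≤ Real.log m := Real.log_nonneg (by exact_mod_cast hm1)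
      have hhalfk : ∀ k, k ≤ K → (2⁻¹:ENNReal) ≤ μ {ω | k < T ω} := by
        intro k hk
        refine hhalf k (hcond k ?_)
        have h1 : (k:ℝ) ≤ Real.log m * ((NN:ℝ)-2*ρ)/(2*ρ) :=
          le_trans (Nat.cast_le.2 hk) (Nat.floor_le (by positivity))
        rw [le_div_iff₀ (by positivity)] at h1
        linarith
      have hsum : ((K+1:ℕ):ENNReal) * 2⁻¹ ≤ ∫⁻ ω, (T ω:ENNReal) ∂μ := by
        calc ((K+1:ℕ):ENNReal) * 2⁻¹ = ∑ k ∈ Finset.range (K+1), (2⁻¹:ENNReal) := by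
              rw [Finset.sum_const, Finset.card_range, nsmul_eq_mul]
          _ ≤ ∑ k ∈ Finset.range (K+1), μ {ω | k < T ω} :=
              Finset.sum_le_sum (fun k hk => hhalfk k (by
                have := Finset.mem_range.1 hk; omega))
          _ ≤ ∫⁻ ω, (T ω:ENNReal) ∂μ := aux_sum_le_lintegral μ T hTmeasSet (K+1)
      refine le_trans ?_ hsum
      have hKcast : ((K+1:ℕ):ENNReal) * 2⁻¹ = ENNReal.ofReal (((K+1:ℕ):ℝ)/2) := by
        rw [ENNReal.ofReal_div_of_pos (by norm_num), ENNReal.ofReal_natCast,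
          ENNReal.ofReal_ofNat, div_eq_mul_inv]
      rw [hKcast]
      refine ENNReal.ofReal_le_ofReal ?_
      have hK1 : Real.log m * ((NN:ℝ)-2*ρ)/(2*ρ) < ((K:ℕ):ℝ)+1 := Nat.lt_floor_add_one _
      have hstep : (n:ℝ)^2 * Real.log n / (8*ρ) ≤ (Real.log m * ((NN:ℝ)-2*ρ)/(2*ρ))/2 := by
        rw [div_le_div_iff₀ (by positivity) (by norm_num)]
        rw [div_mul_eq_mul_div, le_div_iff₀ (by positivity)]
        -- n² log n * 2 * (2ρ) ≤ log m (NN−2ρ) * (8ρ) ⟺ n² log n ≤ 2 log m (NN−2ρ)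
        have hmain : (n:ℝ)^2 * Real.log n ≤ 2 * Real.log m * ((NN:ℝ)-2*ρ) := by
          have hn21 : (21:ℝ) ≤ (n:ℝ) := by exact_mod_cast hlarge
          have hL3 : 3 ≤ Real.log n := aux_three_le_log hn21
          have hl2 : Real.log 2 < 0.6931471808 := Real.log_two_lt_d9
          have hl2pos : 0 < Real.log 2 := Real.log_pos (by norm_num)
          -- log m ≥ log n - log 2
          have hlogm : Real.log n - Real.log 2 ≤ Real.log m := by
            have hmge : (n:ℝ)/2 ≤ (m:ℝ) := by
              have : (n:ℝ) < 2*(m:ℝ) := by exact_mod_cast hmn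
              linarith
            calc Real.log n - Real.log 2 = Real.log ((n:ℝ)/2) := by
                  rw [Real.log_div (by positivity) (by norm_num)]
              _ ≤ Real.log m := Real.log_le_log (by positivity) hmge
          -- NN - 2ρ ≥ (n-1)^2
          have hNNlb : ((n:ℝ)-1)^2 ≤ (NN:ℝ)-2*ρ := by
            rw [hNNr]
            have : (2*(ρ:ℝ)) ≤ (n:ℝ)-1 := by
              have := (Nat.cast_le (α := ℝ)).2 h2ρn
              push_cast [Nat.cast_sub (by omega : 1 ≤ n)] at this
              linarith
            nlinarith
          have h7 : 0 ≤ Real.log n - Real.log 2 := by linarith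
          have h8 : (0:ℝ) ≤ ((n:ℝ)-1)^2 := sq_nonneg _
          have hprod : (Real.log n - Real.log 2) * ((n:ℝ)-1)^2
              ≤ Real.log m * ((NN:ℝ)-2*ρ) :=
            mul_le_mul hlogm hNNlb h8 hlogm0
          -- suffices n² log n ≤ 2 (log n - log 2)(n-1)²
          have hq : (0:ℝ) ≤ (n:ℝ)^2 - 4*(n:ℝ) + 2 := by nlinarith
          have h9 : 3*((n:ℝ)^2 - 4*(n:ℝ) + 2) ≤ Real.log n * ((n:ℝ)^2 - 4*(n:ℝ) + 2) :=
            mul_le_mul_of_nonneg_right hL3 hq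
          have h10 : (n:ℝ)*21 ≤ (n:ℝ)*(n:ℝ) :=
            mul_le_mul_of_nonneg_left hn21 (by positivity)
          nlinarith [hprod, h9, h10, hl2, h8, sq_nonneg ((n:ℝ)-1)]
        nlinarith [mul_le_mul_of_nonneg_right hmain (by positivity : (0:ℝ) ≤ 2*(ρ:ℝ))]
      push_cast
      linarith
  -- measurability of T and conversion to the Bochner integral
  have hTm : Measurable T := by
    refine measurable_to_countable' (fun j => ?_)
    match j with
    | 0 =>
      have : T ⁻¹' {0} = {ω | 0 < T ω}ᶜ := by
        ext ω
        simp only [Set.mem_preimage, Set.mem_singleton_iff, Set.mem_compl_iff,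
          Set.mem_setOf_eq]
        omega
      rw [this]
      exact (hTmeasSet 0).compl
    | (j+1) =>
      have : T ⁻¹' {j+1} = {ω | j < T ω} ∩ {ω | j+1 < T ω}ᶜ := by
        ext ω
        simp only [Set.mem_preimage, Set.mem_singleton_iff, Set.mem_inter_iff,
          Set.mem_compl_iff, Set.mem_setOf_eq]
        omega
      rw [this]
      exact (hTmeasSet j).inter (hTmeasSet (j+1)).compl
  have hsm : AEStronglyMeasurable (fun ω => (T ω : ℝ)) μ :=
    (measurable_from_top.comp hTm).aestronglyMeasurable
  have hint : ∫ ω, (T ω : ℝ) ∂μ = (∫⁻ ω, (T ω : ENNReal) ∂μ).toReal := by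
    rw [integral_eq_lintegral_of_nonneg_ae
      (Filter.Eventually.of_forall (fun ω => Nat.cast_nonneg _)) hsm]
    congr 1
    refine lintegral_congr fun ω => ?_
    rw [ENNReal.ofReal_natCast]
  rw [hint]
  have h0 : 0 ≤ (n:ℝ)^2 * Real.log n / (8*(ρ:ℝ)) := by positivity
  calc (n:ℝ)^2*Real.log n/(8*(ρ:ℝ))
      = (ENNReal.ofReal ((n:ℝ)^2*Real.log n/(8*(ρ:ℝ)))).toReal :=
        (ENNReal.toReal_ofReal h0).symm
    _ ≤ (∫⁻ ω, (T ω:ENNReal) ∂μ).toReal := ENNReal.toReal_mono hfin.ne hkey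
end

section
/- Let (Ω, F, μ) be a probability space with a filtration (F_k)_{k∈ℕ}, let T : Ω → ℕ be an integrable stopping time with respect to (F_k), and let m > 0 be a real number. Suppose that for every k ∈ ℕ, almost surely the conditional expectation E[(T − k)⁺ | F_k] is at most m, where (x)⁺ denotes max(x, 0). Then for every j ∈ ℕ, μ({ω : T(ω) > j · ⌈2m⌉}) ≤ (1/2)^j. -/
open MeasureTheory ProbabilityTheory

/-- Geometric tail bound from a uniform bound on the residual conditional expectation:
if `T` is an integrable `ℕ`-valued stopping time for a filtration `(ℱ k)` on a
probability space and for every `k` the conditional expectation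
`E[(T - k)⁺ | ℱ k] ≤ m` almost surely, then `P(T > j·⌈2m⌉) ≤ (1/2)^j` for all `j`. -/
theorem stmt_12 {Ω : Type*} [m0 : MeasurableSpace Ω]
    (μ : Measure Ω) [IsProbabilityMeasure μ]
    (ℱ : Filtration ℕ m0) (T : Ω → ℕ)
    (hstop : IsStoppingTime ℱ (fun ω => (T ω : WithTop ℕ)))
    (hint : Integrable (fun ω => (T ω : ℝ)) μ)
    (m : ℝ) (hm : 0 < m)
    (hcond : ∀ k : ℕ, ∀ᵐ ω ∂μ,
      (μ[fun ω' => max ((T ω' : ℝ) - k) 0 | ℱ k]) ω ≤ m) :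
    ∀ j : ℕ, μ {ω | j * ⌈2 * m⌉₊ < T ω} ≤ (1 / 2 : ENNReal) ^ j := by
  set c : ℕ := ⌈2 * m⌉₊ with hc
  have hcm : (2 : ℝ) * m ≤ c := Nat.le_ceil _
  have hTmeas : Measurable T := by
    refine measurable_to_countable' fun n => ?_
    have := hstop.measurableSet_eq n
    have h2 : {ω | (T ω : WithTop ℕ) = n} = T ⁻¹' {n} := by ext; simp
    exact h2 ▸ ℱ.le n _ this
  have hTR : Measurable fun ω => (T ω : ℝ) := measurable_from_top.comp hTmeas |>.le le_rfl
  -- integrability of f_k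
  have hfint : ∀ k : ℕ, Integrable (fun ω => max ((T ω : ℝ) - k) 0) μ := by
    intro k
    refine hint.mono ?_ ?_
    · exact ((hTR.sub measurable_const).max measurable_const).aestronglyMeasurable
    · filter_upwards with ω
      have h0 : (0:ℝ) ≤ T ω := Nat.cast_nonneg _
      have h1 : max ((T ω : ℝ) - k) 0 ≤ (T ω : ℝ) := by
        apply max_le _ h0
        linarith [Nat.cast_nonneg (α := ℝ) k]
      rw [Real.norm_eq_abs, Real.norm_eq_abs, abs_of_nonneg h0,
        abs_of_nonneg (le_max_right _ _)]
      exact h1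
  -- key step
  have key : ∀ k : ℕ, μ {ω | k + c < T ω} ≤ (1 / 2) * μ {ω | k < T ω} := by
    intro k
    set A : Set Ω := {ω | k < T ω} with hA
    set B : Set Ω := {ω | k + c < T ω} with hB
    have hAm : MeasurableSet[ℱ k] A := by
      have h := hstop.measurableSet_gt k; rw [hA]; simpa using h
    have hAm0 : MeasurableSet A := ℱ.le k _ hAm
    have hBm0 : MeasurableSet B := (hTmeas measurableSet_Ioi).congr rfl
    have hBA : B ⊆ A := fun ω hω => lt_of_le_of_lt (Nat.le_add_right k c) hω
    set f : Ω → ℝ := fun ω => max ((T ω : ℝ) - k) 0 with hf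
    -- upper bound on ∫_A f
    have h1 : ∫ ω in A, f ω ∂μ ≤ m * (μ A).toReal := by
      rw [← setIntegral_condExp (ℱ.le k) (hfint k) hAm]
      calc ∫ ω in A, (μ[f|ℱ k]) ω ∂μ ≤ ∫ _ in A, m ∂μ := by
            refine setIntegral_mono_ae integrable_condExp.integrableOn
              integrableOn_const ?_
            exact hcond k
        _ = m * (μ A).toReal := by
            rw [setIntegral_const, smul_eq_mul, mul_comm, measureReal_def]
    -- lower bound
    have h2 : (2 * m) * (μ B).toReal ≤ ∫ ω in A, f ω ∂μ := by
      have hle : ∫ ω in B, f ω ∂μ ≤ ∫ ω in A, f ω ∂μ := by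
        refine setIntegral_mono_set (hfint k).integrableOn ?_ (Filter.Eventually.of_forall hBA)
        filter_upwards with ω using le_max_right _ _
      refine le_trans ?_ hle
      calc (2 * m) * (μ B).toReal = ∫ _ in B, (2 * m) ∂μ := by
            rw [setIntegral_const, smul_eq_mul, mul_comm, measureReal_def]
        _ ≤ ∫ ω in B, f ω ∂μ := by
            refine setIntegral_mono_on integrableOn_const
              (hfint k).integrableOn hBm0 ?_
            intro ω hω
            have : (k : ℝ) + c < T ω := by
              have := hω
              simp only [hB, Set.mem_setOf_eq] at this
              exact_mod_cast Nat.lt_of_lt_of_le (Nat.lt_succ_self _) this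
            have : (2 : ℝ) * m ≤ (T ω : ℝ) - k := by
              have hkc : (k + c : ℕ) < T ω := hω
              have : ((k + c : ℕ) : ℝ) < (T ω : ℝ) := by exact_mod_cast hkc
              push_cast at this
              linarith
            exact le_trans this (le_max_left _ _)
    -- combine
    have hAfin : μ A ≠ ⊤ := measure_ne_top _ _
    have hBfin : μ B ≠ ⊤ := measure_ne_top _ _
    have hreal : (μ B).toReal ≤ (1 / 2) * (μ A).toReal := by nlinarith [h1, h2]
    calc μ B = ENNReal.ofReal (μ B).toReal := (ENNReal.ofReal_toReal hBfin).symm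
      _ ≤ ENNReal.ofReal ((1/2) * (μ A).toReal) := ENNReal.ofReal_le_ofReal hreal
      _ = ENNReal.ofReal (1/2) * ENNReal.ofReal (μ A).toReal := by
          rw [ENNReal.ofReal_mul (by norm_num)]
      _ = (1/2) * μ A := by
          rw [ENNReal.ofReal_toReal hAfin]
          congr 1
          rw [ENNReal.ofReal_div_of_pos (by norm_num)]
          norm_num
  intro j
  induction j with
  | zero => simpa using prob_le_one
  | succ j ih =>
    have hset : {ω | (j + 1) * c < T ω} = {ω | j * c + c < T ω} := by
      ext ω
      rw [Set.mem_setOf_eq, Set.mem_setOf_eq, Nat.succ_mul]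
    calc μ {ω | (j + 1) * c < T ω} = μ {ω | j * c + c < T ω} := by rw [hset]
      _ ≤ (1 / 2) * μ {ω | j * c < T ω} := key _
      _ ≤ (1 / 2) * (1 / 2) ^ j := mul_le_mul_right ih _
      _ = (1 / 2) ^ (j + 1) := (pow_succ' _ _).symm
end
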